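/- arXiv:2301.06467 — 11 statements merged into one kernel-verified Lean document; each statement's English description precedes it below -/
import Mathlib

section
/- Let (X,d) be a metric space with Nagata dimension exactly n ∈ ℕ∪{0}, and let ε ∈ (0,1). Then for every integer k with 0 ≤ k < n, there is no Lipschitz light map from the snowflake (X,d^ε) into ℝ^k. -/
open Metric Set
open scoped ENNReal NNReal

/-- `l` is an `r`-path (consecutive distances at most `r`) lying in the set `S`. -/
def IsRPathIn {X : Type*} [PseudoMetricSpace X] (r : ℝ) (S : Set X) (l : List X) : Prop :=
  (∀ z ∈ l, z ∈ S) ∧ l.Chain' (fun a b => dist a b ≤ r)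

/-- `x` and `y` lie in the same `r`-component of `S`: they are joined by an `r`-path in `S`. -/
def SameRComponent {X : Type*} [PseudoMetricSpace X] (r : ℝ) (S : Set X) (x y : X) : Prop :=
  ∃ l : List X, IsRPathIn r S l ∧ l.head? = some x ∧ l.getLast? = some y

/-- `f` is Lipschitz light with constant `C`: it is `C`-Lipschitz and, for every `r > 0` and
every `W ⊆ Y` with `diam W ≤ r`, every `r`-component of `f ⁻¹' W` has diameter at most `C * r`. -/
def LipschitzLightWith {X Y : Type*} [PseudoMetricSpace X] [PseudoMetricSpace Y]
    (C : ℝ) (f : X → Y) : Prop :=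
  (∀ x y : X, dist (f x) (f y) ≤ C * dist x y) ∧
  ∀ r : ℝ, 0 < r → ∀ W : Set Y, EMetric.diam W ≤ ENNReal.ofReal r →
    ∀ x y : X, SameRComponent r (f ⁻¹' W) x y → dist x y ≤ C * r

/-- `X` has Nagata dimension at most `n` with constant `c`: for every `s > 0` there is a
`c*s`-bounded covering of `X` with `s`-multiplicity at most `n + 1`. -/
def NagataWith (X : Type*) [PseudoMetricSpace X] (n : ℕ) (c : ℝ) : Prop :=
  ∀ s : ℝ, 0 < s → ∃ 𝓑 : Set (Set X), (⋃₀ 𝓑 = univ) ∧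
    (∀ B ∈ 𝓑, EMetric.diam B ≤ ENNReal.ofReal (c * s)) ∧
    ∀ E : Set X, EMetric.diam E ≤ ENNReal.ofReal s →
      {B ∈ 𝓑 | (B ∩ E).Nonempty}.encard ≤ (n + 1 : ℕ)

/-- The Nagata dimension of a metric space, as an element of `ℕ∞`. -/
noncomputable def nagataDim (X : Type*) [PseudoMetricSpace X] : ℕ∞ :=
  sInf ((fun n : ℕ => (n : ℕ∞)) '' {n : ℕ | ∃ c : ℝ, 0 < c ∧ NagataWith X n c})

/-- The snowflake metric space `(X, d^ε)`. -/
noncomputable def Snowflake {X : Type*} (m : MetricSpace X) {ε : ℝ}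
    (h0 : 0 < ε) (h1 : ε ≤ 1) : MetricSpace X :=
  letI := m
  { dist := fun x y => dist x y ^ ε
    dist_self := fun x => by simp [Real.zero_rpow h0.ne']
    dist_comm := fun x y => by simp only [dist_comm]
    dist_triangle := fun x y z => by
      calc dist x z ^ ε ≤ (dist x y + dist y z) ^ ε :=
            Real.rpow_le_rpow dist_nonneg (dist_triangle x y z) h0.le
        _ ≤ dist x y ^ ε + dist y z ^ ε := by
            have h := NNReal.rpow_add_le_add_rpow (Real.toNNReal (dist x y))
              (Real.toNNReal (dist y z)) h0.le h1
            have h2 : ((Real.toNNReal (dist x y) + Real.toNNReal (dist y z) : ℝ≥0) : ℝ) ^ ε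
                ≤ ((Real.toNNReal (dist x y) : ℝ)) ^ ε + ((Real.toNNReal (dist y z) : ℝ)) ^ ε := by
              exact_mod_cast h
            simpa [Real.coe_toNNReal _ dist_nonneg] using h2
    eq_of_dist_eq_zero := fun {x y} h => by
      have : dist x y = 0 := (Real.rpow_eq_zero dist_nonneg h0.ne').mp h
      exact eq_of_dist_eq_zero this }


section Aux

-- ## r-components

variable {X : Type*} [PseudoMetricSpace X] {r : ℝ} {S : Set X} {x y z : X}

lemma same_mem_left (h : SameRComponent r S x y) : x ∈ S := by
  obtain ⟨l, ⟨hmem, _⟩, hh, _⟩ := h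
  exact hmem x (List.mem_of_mem_head? (by simp [hh]))

lemma same_refl (hx : x ∈ S) : SameRComponent r S x x :=
  ⟨[x], ⟨by simpa using hx, List.isChain_singleton x⟩, rfl, rfl⟩

lemma same_symm (h : SameRComponent r S x y) : SameRComponent r S y x := by
  obtain ⟨l, ⟨hmem, hch⟩, hh, hl⟩ := h
  refine ⟨l.reverse, ⟨by simpa using hmem, ?_⟩, by simpa using hl, by simpa using hh⟩
  refine List.isChain_reverse.mpr ?_
  exact hch.imp fun a b hab => show dist b a ≤ r by simpa [dist_comm] using hab

lemma same_trans (hr : 0 ≤ r) (h1 : SameRComponent r S x y) (h2 : SameRComponent r S y z) :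
    SameRComponent r S x z := by
  obtain ⟨l1, ⟨hm1, hc1⟩, hh1, hl1⟩ := h1
  obtain ⟨l2, ⟨hm2, hc2⟩, hh2, hl2⟩ := h2
  refine ⟨l1 ++ l2, ⟨?_, ?_⟩, ?_, ?_⟩
  · intro w hw; rcases List.mem_append.mp hw with h | h
    · exact hm1 w h
    · exact hm2 w h
  · refine hc1.append hc2 ?_
    intro a ha b hb
    rw [hl1] at ha; rw [hh2] at hb
    simp only [Option.mem_def, Option.some.injEq] at ha hb
    subst ha; subst hb; simpa [dist_self] using hr
  · rw [List.head?_append, hh1]; rfl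
  · rw [List.getLast?_append, hl2]; rfl

lemma same_of_dist_le (hx : x ∈ S) (hy : y ∈ S) (hd : dist x y ≤ r) :
    SameRComponent r S x y :=
  ⟨[x, y], ⟨by simp [hx, hy], List.isChain_pair.mpr hd⟩, rfl, rfl⟩

/-- The r-component of x in S. -/
def rComp (r : ℝ) (S : Set X) (x : X) : Set X := {y | SameRComponent r S x y}

lemma rComp_eq (hr : 0 ≤ r) (h : SameRComponent r S x y) : rComp r S x = rComp r S y := by
  ext w
  exact ⟨fun hw => same_trans hr (same_symm h) hw, fun hw => same_trans hr h hw⟩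

lemma dist_le_of_ediam' {E : Set X} {s : ℝ} (hs : 0 ≤ s)
    (hE : EMetric.diam E ≤ ENNReal.ofReal s) (hx : x ∈ E) (hy : y ∈ E) :
    dist x y ≤ s := by
  have := (EMetric.edist_le_diam_of_mem hx hy).trans hE
  rw [edist_dist] at this
  exact (ENNReal.ofReal_le_ofReal_iff hs).mp this

end Aux

-- ## Pulling back Nagata covers along Lipschitz light maps

lemma nagata_pullback {X Y : Type*} [PseudoMetricSpace X] [PseudoMetricSpace Y]
    {k : ℕ} {C c : ℝ} (hC : 0 < C) (hc : 0 < c) {f : X → Y}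
    (hf : LipschitzLightWith C f) (hY : NagataWith Y k c) :
    ∃ c' : ℝ, 0 < c' ∧ NagataWith X k c' := by
  refine ⟨C * max (c * C) 1, by positivity, ?_⟩
  intro s hs
  obtain ⟨𝓑, hcov, hdiam, hmult⟩ := hY (C * s) (by positivity)
  set r := max (c * C) 1 * s with hr
  have hrpos : 0 < r := by positivity
  have hsr : s ≤ r := le_mul_of_one_le_left hs.le (le_max_right _ _)
  have hdiamr : ∀ B ∈ 𝓑, EMetric.diam B ≤ ENNReal.ofReal r := by
    intro B hB
    refine (hdiam B hB).trans (ENNReal.ofReal_le_ofReal ?_)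
    rw [hr, ← mul_assoc]
    exact mul_le_mul_of_nonneg_right (le_max_left _ _) hs.le
  refine ⟨{A | ∃ B ∈ 𝓑, ∃ x ∈ f ⁻¹' B, A = rComp r (f ⁻¹' B) x}, ?_, ?_, ?_⟩
  · apply eq_univ_of_forall
    intro x
    have : f x ∈ ⋃₀ 𝓑 := by rw [hcov]; trivial
    obtain ⟨B, hB, hfx⟩ := this
    exact ⟨rComp r (f ⁻¹' B) x, ⟨B, hB, x, hfx, rfl⟩, same_refl hfx⟩
  · rintro A ⟨B, hB, x, hx, rfl⟩
    apply EMetric.diam_le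
    intro a ha b hb
    rw [edist_dist]
    have hab : SameRComponent r (f ⁻¹' B) a b :=
      same_trans hrpos.le (same_symm ha) hb
    have := hf.2 r hrpos B (hdiamr B hB) a b hab
    refine (ENNReal.ofReal_le_ofReal (this.trans ?_))
    rw [hr, ← mul_assoc]
  · intro E hE
    have hfE : EMetric.diam (f '' E) ≤ ENNReal.ofReal (C * s) := by
      apply EMetric.diam_le
      rintro _ ⟨a, ha, rfl⟩ _ ⟨b, hb, rfl⟩
      rw [edist_dist]
      apply ENNReal.ofReal_le_ofReal
      exact (hf.1 a b).trans (mul_le_mul_of_nonneg_left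
        (dist_le_of_ediam' hs.le hE ha hb) hC.le)
    have hcard := hmult (f '' E) hfE
    classical
    set g : Set Y → Set X := fun B =>
      if h : (f ⁻¹' B ∩ E).Nonempty then rComp r (f ⁻¹' B) h.choose else ∅ with hg
    have hsub : {A ∈ {A | ∃ B ∈ 𝓑, ∃ x ∈ f ⁻¹' B, A = rComp r (f ⁻¹' B) x} | (A ∩ E).Nonempty}
        ⊆ g '' {B ∈ 𝓑 | (B ∩ f '' E).Nonempty} := by
      rintro A ⟨⟨B, hB, x, hx, rfl⟩, w, hwA, hwE⟩
      have hwB : w ∈ f ⁻¹' B := same_mem_left (same_symm hwA)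
      have hne : (f ⁻¹' B ∩ E).Nonempty := ⟨w, hwB, hwE⟩
      refine ⟨B, ⟨hB, f w, ⟨hwB, w, hwE, rfl⟩⟩, ?_⟩
      rw [hg]
      simp only [hne, dif_pos]
      have hch := hne.choose_spec
      have h1 : rComp r (f ⁻¹' B) x = rComp r (f ⁻¹' B) w := rComp_eq hrpos.le hwA
      have h2 : SameRComponent r (f ⁻¹' B) hne.choose w :=
        same_of_dist_le hch.1 hwB ((dist_le_of_ediam' hs.le hE hch.2 hwE).trans hsr)
      rw [rComp_eq hrpos.le h2, h1]
    calc _ ≤ (g '' {B ∈ 𝓑 | (B ∩ f '' E).Nonempty}).encard := Set.encard_le_encard hsub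
      _ ≤ {B ∈ 𝓑 | (B ∩ f '' E).Nonempty}.encard := Set.encard_image_le _ _
      _ ≤ (k + 1 : ℕ) := hcard

-- ## Euclidean space has Nagata dimension at most k

/-- Shifted shrunk cube of color `j` and index `v`, at scale `s`. -/
def eucCube (k : ℕ) (s : ℝ) (j : ℕ) (v : Fin k → ℤ) : Set (EuclideanSpace ℝ (Fin k)) :=
  {x | ∀ i, x i - 2*s*((j:ℝ) + ((k:ℝ)+1) * (v i : ℝ)) ∈ Icc s ((2*(k:ℝ)+1)*s)}

lemma coord_dist_le {k : ℕ} (a b : EuclideanSpace ℝ (Fin k)) (i : Fin k) :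
    dist (a i) (b i) ≤ dist a b := by
  rw [EuclideanSpace.dist_eq]
  have h1 : dist (a i) (b i) ^ 2 ≤ ∑ i', dist (a i') (b i') ^ 2 :=
    Finset.single_le_sum (f := fun i' => dist (a i') (b i') ^ 2)
      (fun _ _ => by positivity) (Finset.mem_univ i)
  calc dist (a i) (b i) = Real.sqrt (dist (a i) (b i) ^ 2) := (Real.sqrt_sq dist_nonneg).symm
    _ ≤ _ := Real.sqrt_le_sqrt h1

/-- Two cubes of the same color meeting a set of diameter ≤ s coincide. -/
lemma eucCube_same_color {k : ℕ} {s : ℝ} (hs : 0 < s) {j : ℕ} {v v' : Fin k → ℤ}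
    {E : Set (EuclideanSpace ℝ (Fin k))} (hE : EMetric.diam E ≤ ENNReal.ofReal s)
    (h1 : (eucCube k s j v ∩ E).Nonempty) (h2 : (eucCube k s j v' ∩ E).Nonempty) :
    v = v' := by
  obtain ⟨a, ha, haE⟩ := h1
  obtain ⟨b, hb, hbE⟩ := h2
  funext i
  by_contra hne
  have hab : dist a b ≤ s := dist_le_of_ediam' hs.le hE haE hbE
  have hi : |a i - b i| ≤ s := by
    have := (coord_dist_le a b i).trans hab
    rwa [Real.dist_eq] at this
  have ha' := ha i
  have hb' := hb i
  simp only [eucCube, mem_setOf_eq, mem_Icc] at ha' hb'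
  rcases lt_or_gt_of_ne hne with h | h
  · have hq : ((v i : ℝ)) + 1 ≤ (v' i : ℝ) := by exact_mod_cast h
    have : 2*s ≤ b i - a i := by nlinarith
    have : 2*s ≤ |a i - b i| := by rw [abs_sub_comm]; exact this.trans (le_abs_self _)
    linarith
  · have hq : ((v' i : ℝ)) + 1 ≤ (v i : ℝ) := by exact_mod_cast h
    have h2s : 2*s ≤ a i - b i := by nlinarith
    have : 2*s ≤ |a i - b i| := h2s.trans (le_abs_self _)
    linarith

lemma eucCube_diam {k : ℕ} {s : ℝ} (hs : 0 < s) (j : ℕ) (v : Fin k → ℤ) :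
    EMetric.diam (eucCube k s j v) ≤ ENNReal.ofReal ((2*(k:ℝ)^2+1) * s) := by
  apply EMetric.diam_le
  intro a ha b hb
  rw [edist_dist]
  apply ENNReal.ofReal_le_ofReal
  have hcoord : ∀ i, dist (a i) (b i) ≤ 2*(k:ℝ)*s := by
    intro i
    have ha' := ha i
    have hb' := hb i
    simp only [eucCube, mem_setOf_eq, mem_Icc] at ha' hb'
    rw [Real.dist_eq, abs_le]
    constructor <;> nlinarith
  rw [EuclideanSpace.dist_eq]
  have hsum : ∑ i, dist (a i) (b i) ^ 2 ≤ (2*(k:ℝ)^2*s)^2 := by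
    calc ∑ i, dist (a i) (b i) ^ 2 ≤ ∑ _i : Fin k, (2*(k:ℝ)*s)^2 := by
          apply Finset.sum_le_sum
          intro i _
          have := hcoord i
          have h0 : (0:ℝ) ≤ dist (a i) (b i) := dist_nonneg
          nlinarith
      _ = (k:ℝ) * (2*(k:ℝ)*s)^2 := by rw [Finset.sum_const]; simp [mul_comm]
      _ ≤ (2*(k:ℝ)^2*s)^2 := by
          have hk : (0:ℝ) ≤ (k:ℝ) := Nat.cast_nonneg k
          have hk34 : (k:ℝ)^3 ≤ (k:ℝ)^4 := by
            rcases Nat.eq_zero_or_pos k with h | h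
            · simp [h]
            · have h1 : (1:ℝ) ≤ (k:ℝ) := by exact_mod_cast h
              exact pow_le_pow_right₀ h1 (by norm_num)
          nlinarith [mul_le_mul_of_nonneg_right hk34 (sq_nonneg s)]
  calc Real.sqrt (∑ i, dist (a i) (b i) ^ 2) ≤ Real.sqrt ((2*(k:ℝ)^2*s)^2) :=
        Real.sqrt_le_sqrt hsum
    _ = 2*(k:ℝ)^2*s := by
        rw [Real.sqrt_sq (by positivity)]
    _ ≤ (2*(k:ℝ)^2+1) * s := by nlinarith

lemma nagata_euclidean (k : ℕ) : NagataWith (EuclideanSpace ℝ (Fin k)) k (2*(k:ℝ)^2+1) := by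
  intro s hs
  classical
  refine ⟨{B | ∃ j < k+1, ∃ v, B = eucCube k s j v}, ?_, ?_, ?_⟩
  · -- covering
    apply Set.eq_univ_of_forall
    intro x
    set y : Fin k → ℝ := fun i => x i / (2*s) with hy
    set bad : ℕ → Fin k → Prop :=
      fun j i => ∃ t : ℤ, |y i - ((j:ℝ) + ((k:ℝ)+1)*(t:ℝ))| < 1/2 with hbaddef
    have uniq : ∀ j j' i, j < k+1 → j' < k+1 → bad j i → bad j' i → j = j' := by
      rintro j j' i hj hj' ⟨t, ht⟩ ⟨t', ht'⟩
      have h1 : |((j:ℝ) + ((k:ℝ)+1)*(t:ℝ)) - ((j':ℝ) + ((k:ℝ)+1)*(t':ℝ))| < 1 := by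
        have h2 := abs_sub_le ((j:ℝ) + ((k:ℝ)+1)*(t:ℝ)) (y i) ((j':ℝ) + ((k:ℝ)+1)*(t':ℝ))
        rw [abs_sub_comm ((j:ℝ) + ((k:ℝ)+1)*(t:ℝ)) (y i)] at h2
        linarith
      have hcast : ((((j:ℤ) + ((k:ℤ)+1)*t) - ((j':ℤ) + ((k:ℤ)+1)*t') : ℤ) : ℝ)
          = ((j:ℝ) + ((k:ℝ)+1)*(t:ℝ)) - ((j':ℝ) + ((k:ℝ)+1)*(t':ℝ)) := by
        push_cast
        ring
      have habs : |(((j:ℤ) + ((k:ℤ)+1)*t) - ((j':ℤ) + ((k:ℤ)+1)*t'))| < 1 := by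
        have : |(((((j:ℤ) + ((k:ℤ)+1)*t) - ((j':ℤ) + ((k:ℤ)+1)*t')) : ℤ) : ℝ)| < 1 := by
          rw [hcast]; exact h1
        exact_mod_cast this
      have huu : ((j:ℤ) + ((k:ℤ)+1)*t) = ((j':ℤ) + ((k:ℤ)+1)*t') :=
        sub_eq_zero.mp (Int.abs_lt_one_iff.mp habs)
      have hdvd : ((k:ℤ)+1) ∣ ((j:ℤ) - (j':ℤ)) := ⟨t' - t, by rw [mul_sub]; linarith⟩
      have : (j:ℤ) - (j':ℤ) = 0 := by
        apply Int.eq_zero_of_abs_lt_dvd hdvd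
        rw [abs_lt]
        omega
      omega
    set badF : Fin k → ℕ :=
      fun i => if h : ∃ j, j < k+1 ∧ bad j i then h.choose else 0 with hbadF
    have hnsub : ¬ (Finset.range (k+1) ⊆ Finset.image badF Finset.univ) := by
      intro hsub
      have h1 := Finset.card_le_card hsub
      have h2 := Finset.card_image_le (s := Finset.univ) (f := badF)
      simp [Finset.card_range] at h1 h2
      omega
    obtain ⟨j, hjr, hjni⟩ := Finset.not_subset.mp hnsub
    have hj : j < k+1 := Finset.mem_range.mp hjr
    have hgood : ∀ i, ¬ bad j i := by
      intro i hbadji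
      have hex : ∃ j', j' < k+1 ∧ bad j' i := ⟨j, hj, hbadji⟩
      have hspec := hex.choose_spec
      have heq : badF i = hex.choose := dif_pos hex
      have : badF i = j := by
        rw [heq]
        exact uniq hex.choose j i hspec.1 hj hspec.2 hbadji
      exact hjni (Finset.mem_image.mpr ⟨i, Finset.mem_univ i, this⟩)
    set v : Fin k → ℤ := fun i => ⌊(y i - (j:ℝ))/((k:ℝ)+1)⌋ with hv
    refine ⟨eucCube k s j v, ⟨j, hj, v, rfl⟩, ?_⟩
    intro i
    have hk1 : (0:ℝ) < (k:ℝ)+1 := by positivity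
    set q : ℝ := (y i - (j:ℝ))/((k:ℝ)+1) with hq
    have hyq : y i - (j:ℝ) = q * ((k:ℝ)+1) := by
      rw [hq]; field_simp
    have hfl : ((v i : ℤ) : ℝ) ≤ q := Int.floor_le q
    have hfl2 : q < (v i : ℝ) + 1 := Int.lt_floor_add_one q
    set w : ℝ := y i - (j:ℝ) - ((k:ℝ)+1)*(v i : ℝ) with hw
    have hw0 : 0 ≤ w := by nlinarith
    have hw1 : w < (k:ℝ)+1 := by nlinarith
    have hnb := hgood i
    simp only [hbaddef] at hnb
    push_neg at hnb
    have hlow : 1/2 ≤ w := by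
      have := hnb (v i)
      rw [show y i - ((j:ℝ) + ((k:ℝ)+1)*((v i : ℤ):ℝ)) = w by rw [hw]; ring] at this
      rwa [abs_of_nonneg hw0] at this
    have hhigh : w ≤ (k:ℝ) + 1/2 := by
      have h3 := hnb (v i + 1)
      rw [show y i - ((j:ℝ) + ((k:ℝ)+1)*(((v i + 1 : ℤ)):ℝ)) = w - ((k:ℝ)+1) by
        push_cast; rw [hw]; ring] at h3
      rw [abs_of_nonpos (by linarith)] at h3
      linarith
    have hx2s : x i = 2*s*(y i) := by
      rw [hy]; field_simp
    have h2sw : x i - 2*s*((j:ℝ) + ((k:ℝ)+1)*(v i : ℝ)) = 2*s*w := by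
      rw [hw, hx2s]; ring
    simp only [eucCube, Set.mem_setOf_eq, Set.mem_Icc]
    rw [h2sw]
    constructor
    · nlinarith
    · nlinarith
  · -- diameters
    rintro B ⟨j, hj, v, rfl⟩
    exact eucCube_diam hs j v
  · -- multiplicity
    intro E hE
    set g : ℕ → Set (EuclideanSpace ℝ (Fin k)) :=
      fun j => if h : ∃ v, (eucCube k s j v ∩ E).Nonempty then eucCube k s j h.choose else ∅
      with hg
    have hsub : {B ∈ {B | ∃ j < k+1, ∃ v, B = eucCube k s j v} | (B ∩ E).Nonempty}
        ⊆ g '' ↑(Finset.range (k+1)) := by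
      rintro B ⟨⟨j, hj, v, rfl⟩, hne⟩
      refine ⟨j, by simpa using hj, ?_⟩
      have hex : ∃ v', (eucCube k s j v' ∩ E).Nonempty := ⟨v, hne⟩
      rw [hg]
      simp only [hex, dif_pos]
      have := eucCube_same_color hs hE hex.choose_spec hne
      rw [this]
    calc {B ∈ {B | ∃ j < k+1, ∃ v, B = eucCube k s j v} | (B ∩ E).Nonempty}.encard
        ≤ (g '' ↑(Finset.range (k+1))).encard := Set.encard_le_encard hsub
      _ ≤ (↑(Finset.range (k+1)) : Set ℕ).encard := Set.encard_image_le _ _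
      _ ≤ (k + 1 : ℕ) := by
          rw [Set.encard_coe_eq_coe_finsetCard, Finset.card_range]

-- ## Snowflake transfer and dimension bound

lemma snowflake_dist {X : Type*} (m : MetricSpace X) {ε : ℝ} (h0 : 0 < ε) (h1 : ε ≤ 1)
    (x y : X) :
    @dist X (Snowflake m h0 h1).toPseudoMetricSpace.toDist x y
      = (@dist X m.toPseudoMetricSpace.toDist x y) ^ ε := rfl

lemma snowflake_ediam_le {X : Type*} (m : MetricSpace X) {ε : ℝ} (h0 : 0 < ε) (h1 : ε ≤ 1)
    {E : Set X} {s : ℝ} (hs : 0 < s)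
    (hEd : @EMetric.diam X m.toPseudoMetricSpace.toPseudoEMetricSpace E ≤ ENNReal.ofReal s) :
    @EMetric.diam X (Snowflake m h0 h1).toPseudoMetricSpace.toPseudoEMetricSpace E
      ≤ ENNReal.ofReal (s ^ ε) := by
  letI := Snowflake m h0 h1
  apply EMetric.diam_le
  intro a ha b hb
  rw [edist_dist]
  apply ENNReal.ofReal_le_ofReal
  rw [snowflake_dist m h0 h1]
  exact Real.rpow_le_rpow (@dist_nonneg X m.toPseudoMetricSpace a b)
    (@dist_le_of_ediam' X m.toPseudoMetricSpace a b E s hs.le hEd ha hb) h0.le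

lemma nagata_snowflake {X : Type*} (m : MetricSpace X) {ε : ℝ} (h0 : 0 < ε) (h1 : ε ≤ 1)
    {k : ℕ} {c : ℝ} (hc : 0 < c)
    (h : @NagataWith X (Snowflake m h0 h1).toPseudoMetricSpace k c) :
    ∃ c' : ℝ, 0 < c' ∧ @NagataWith X m.toPseudoMetricSpace k c' := by
  letI := m
  refine ⟨c ^ ε⁻¹, Real.rpow_pos_of_pos hc _, ?_⟩
  intro s hs
  obtain ⟨𝓑, hcov, hdiam, hmult⟩ := h (s ^ ε) (Real.rpow_pos_of_pos hs ε)
  refine ⟨𝓑, hcov, ?_, ?_⟩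
  · intro B hB
    apply EMetric.diam_le
    intro a ha b hb
    rw [edist_dist]
    apply ENNReal.ofReal_le_ofReal
    have hsf : dist a b ^ ε ≤ c * s ^ ε := by
      have := @dist_le_of_ediam' X (Snowflake m h0 h1).toPseudoMetricSpace a b B
        (c * s ^ ε) (by positivity) (hdiam B hB) ha hb
      rwa [snowflake_dist m h0 h1] at this
    calc dist a b = (dist a b ^ ε) ^ ε⁻¹ := by
          rw [← Real.rpow_mul dist_nonneg, mul_inv_cancel₀ h0.ne', Real.rpow_one]
      _ ≤ (c * s ^ ε) ^ ε⁻¹ := Real.rpow_le_rpow (by positivity) hsf (by positivity)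
      _ = c ^ ε⁻¹ * s := by
          rw [Real.mul_rpow hc.le (by positivity), ← Real.rpow_mul hs.le,
            mul_inv_cancel₀ h0.ne', Real.rpow_one]
  · intro E hEd
    exact hmult E (snowflake_ediam_le m h0 h1 hs hEd)

lemma nagataDim_le {X : Type*} [PseudoMetricSpace X] {k : ℕ} {c : ℝ} (hc : 0 < c)
    (h : NagataWith X k c) : nagataDim X ≤ (k : ℕ∞) :=
  sInf_le ⟨k, ⟨c, hc, h⟩, rfl⟩

/-- If `(X,d)` has Nagata dimension exactly `n`, then for `ε ∈ (0,1)` and `k < n` there is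
no Lipschitz light map from the snowflake `(X, d^ε)` into `ℝᵏ`. -/
theorem no_lipschitzLight_below_nagataDim (X : Type*) (m : MetricSpace X) (n : ℕ)
    (hn : @nagataDim X m.toPseudoMetricSpace = (n : ℕ∞))
    (ε : ℝ) (hε0 : 0 < ε) (hε1 : ε < 1) (k : ℕ) (hk : k < n) :
    ¬ ∃ (C : ℝ) (f : X → EuclideanSpace ℝ (Fin k)), 0 < C ∧
        @LipschitzLightWith X (EuclideanSpace ℝ (Fin k))
          (Snowflake m hε0 hε1.le).toPseudoMetricSpace inferInstance C f := by
  rintro ⟨C, f, hC, hf⟩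
  obtain ⟨c', hc', hN⟩ := @nagata_pullback X (EuclideanSpace ℝ (Fin k))
    (Snowflake m hε0 hε1.le).toPseudoMetricSpace inferInstance k C (2*(k:ℝ)^2+1)
    hC (by positivity) f hf (nagata_euclidean k)
  obtain ⟨c'', hc'', hN'⟩ := nagata_snowflake m hε0 hε1.le hc' hN
  have hle : @nagataDim X m.toPseudoMetricSpace ≤ (k : ℕ∞) :=
    @nagataDim_le X m.toPseudoMetricSpace k c'' hc'' hN'
  rw [hn] at hle
  exact absurd (Nat.cast_le.mp hle) (by omega)
end

section
/- Let X be a metric space whose Nagata dimension is at most n with Nagata constant C. Then there exist constants c ≥ 1 and r_0 > 0, depending only on n and C, such that for every r ≥ r_0 there is a sequence of coverings B^j of X (j ∈ ℤ) with the following properties: (i) for each j ∈ ℤ, B^j = ∪_{k=0}^n B^j_k, where each family B^j_k is c·r^j-bounded and has (1/2)r^j-multiplicity at most 1; (ii) for each j ∈ ℤ and x ∈ X, there is a member B ∈ B^j containing the closed ball of radius r^j about x; (iii) every member of every B^j is open. -/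
open Metric Set
open scoped ENNReal NNReal

namespace AdjCov

variable {X : Type*} [MetricSpace X]

noncomputable def tau (M : ℝ) (B : Set X) (x : X) : ℝ :=
  max (M - Metric.infDist x B) 0

lemma tau_nonneg (M : ℝ) (B : Set X) (x : X) : 0 ≤ tau M B x := le_max_right _ _

lemma tau_lip (M : ℝ) (B : Set X) (x y : X) : tau M B x ≤ tau M B y + dist x y := by
  have h : Metric.infDist y B ≤ Metric.infDist x B + dist y x :=
    Metric.infDist_le_infDist_add_dist
  refine max_le ?_ (add_nonneg (tau_nonneg _ _ _) dist_nonneg)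
  have h1 : M - Metric.infDist x B ≤ (M - Metric.infDist y B) + dist x y := by
    rw [dist_comm]; linarith
  exact h1.trans (add_le_add (le_max_left _ _) le_rfl)

lemma tau_mem {M : ℝ} (hM : 0 ≤ M) {B : Set X} {x : X} (hx : x ∈ B) : tau M B x = M := by
  rw [tau, Metric.infDist_zero_of_mem hx, sub_zero, max_eq_left hM]

lemma tau_continuous (M : ℝ) (B : Set X) : Continuous (fun x => tau M B x) :=
  (continuous_const.sub (Metric.continuous_infDist_pt B)).max continuous_const

noncomputable def gS (M : ℝ) (𝓑 : Set (Set X)) (S : Finset (Set X)) (x : X) : ℝ :=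
  sSup (insert 0 ((fun B => tau M B x) '' (𝓑 \ ↑S)))

lemma gS_bdd (M : ℝ) (𝓑 : Set (Set X)) (S : Finset (Set X)) (x : X) :
    BddAbove (insert 0 ((fun B => tau M B x) '' (𝓑 \ ↑S))) := by
  refine ⟨max M 0, ?_⟩
  rintro b (rfl | ⟨B, hB, rfl⟩)
  · exact le_max_right _ _
  · exact max_le ((sub_le_self _ (Metric.infDist_nonneg)).trans (le_max_left _ _)) (le_max_right _ _)

lemma gS_nonneg (M : ℝ) (𝓑 : Set (Set X)) (S : Finset (Set X)) (x : X) :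
    0 ≤ gS M 𝓑 S x :=
  le_csSup (gS_bdd M 𝓑 S x) (mem_insert _ _)

lemma gS_le {M c : ℝ} {𝓑 : Set (Set X)} {S : Finset (Set X)} {x : X} (h0 : 0 ≤ c)
    (h : ∀ B ∈ 𝓑 \ (↑S : Set (Set X)), tau M B x ≤ c) : gS M 𝓑 S x ≤ c := by
  refine csSup_le (insert_nonempty _ _) ?_
  rintro b (rfl | ⟨B, hB, rfl⟩)
  · exact h0
  · exact h B hB

lemma le_gS {M : ℝ} {𝓑 : Set (Set X)} {S : Finset (Set X)} {B : Set X} {x : X}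
    (hB : B ∈ 𝓑) (hBS : B ∉ S) : tau M B x ≤ gS M 𝓑 S x :=
  le_csSup (gS_bdd M 𝓑 S x) (mem_insert_of_mem _ ⟨B, ⟨hB, hBS⟩, rfl⟩)

lemma gS_lip (M : ℝ) (𝓑 : Set (Set X)) (S : Finset (Set X)) (x y : X) :
    gS M 𝓑 S x ≤ gS M 𝓑 S y + dist x y := by
  refine gS_le (add_nonneg (gS_nonneg _ _ _ _) dist_nonneg) (fun B hB => ?_)
  exact (tau_lip M B x y).trans (add_le_add (le_gS hB.1 hB.2) le_rfl)

lemma gS_continuous (M : ℝ) (𝓑 : Set (Set X)) (S : Finset (Set X)) :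
    Continuous (fun x => gS M 𝓑 S x) := by
  refine (LipschitzWith.of_dist_le_mul (K := 1) (fun x y => ?_)).continuous
  rw [Real.dist_eq]
  push_cast
  rw [one_mul, abs_sub_le_iff]
  constructor
  · linarith [gS_lip M 𝓑 S x y]
  · linarith [gS_lip M 𝓑 S y x, dist_comm x y]

noncomputable def US (M t : ℝ) (𝓑 : Set (Set X)) (S : Finset (Set X)) : Set X :=
  {x | ∀ B ∈ S, gS M 𝓑 S x + t / 2 < tau M B x}

lemma isOpen_US (M t : ℝ) (𝓑 : Set (Set X)) (S : Finset (Set X)) :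
    IsOpen (US M t 𝓑 S) := by
  have : US M t 𝓑 S = ⋂ B ∈ S, {x | gS M 𝓑 S x + t / 2 < tau M B x} := by
    ext x; simp [US]
  rw [this]
  exact isOpen_biInter_finset (fun B _ =>
    isOpen_lt ((gS_continuous M 𝓑 S).add continuous_const) (tau_continuous M B))

theorem key (n : ℕ) {C : ℝ} (hC : 0 < C) (X : Type) [MetricSpace X]
    (hX : NagataWith X n C) {t : ℝ} (ht : 0 < t) :
    ∃ 𝓕 : Fin (n + 1) → Set (Set X),
      (∀ k, ∀ B ∈ 𝓕 k, IsOpen B) ∧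
      (∀ k, ∀ B ∈ 𝓕 k, EMetric.diam B ≤ ENNReal.ofReal (6 * (C + 1) * ((n : ℝ) + 2) * t)) ∧
      (∀ k (E : Set X), EMetric.diam E ≤ ENNReal.ofReal (t / 2) →
        {B ∈ 𝓕 k | (B ∩ E).Nonempty}.encard ≤ 1) ∧
      (∀ x : X, ∃ k, ∃ B ∈ 𝓕 k, Metric.closedBall x t ⊆ B) := by
  classical
  set M : ℝ := 3 * ((n : ℝ) + 2) * t with hMdef
  have hM0 : 0 < M := by positivity
  obtain ⟨𝓑₀, hcov, hdiam, hmult⟩ := hX (2 * M) (by positivity)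
  set 𝓑 : Set (Set X) := {B ∈ 𝓑₀ | B.Nonempty} with h𝓑
  have h𝓑sub : 𝓑 ⊆ 𝓑₀ := sep_subset _ _
  have hne𝓑 : ∀ B ∈ 𝓑, (B : Set X).Nonempty := fun B hB => hB.2
  have hP : ∀ x : X, {B ∈ 𝓑 | 0 < tau M B x}.encard ≤ (n + 1 : ℕ) := by
    intro x
    refine le_trans (Set.encard_mono ?_) (hmult (Metric.closedBall x M) ?_)
    · rintro B ⟨⟨hB0, hBne⟩, hpos⟩
      refine ⟨hB0, ?_⟩
      have hinf : Metric.infDist x B < M := by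
        by_contra h
        push_neg at h
        rw [tau, max_eq_right (by linarith)] at hpos
        exact lt_irrefl _ hpos
      obtain ⟨b, hbB, hbd⟩ := (Metric.infDist_lt_iff hBne).mp hinf
      exact ⟨b, hbB, Metric.mem_closedBall.mpr (by rw [dist_comm]; linarith)⟩
    · refine EMetric.diam_le (fun p hp q hq => ?_)
      rw [edist_dist]
      refine ENNReal.ofReal_le_ofReal ?_
      have hp' := Metric.mem_closedBall.mp hp
      have hq' := Metric.mem_closedBall.mp hq
      have h1 : dist p q ≤ dist p x + dist q x := by
        rw [dist_comm q x]; exact dist_triangle _ _ _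
      linarith
  refine ⟨fun k => {V | ∃ S : Finset (Set X), ↑S ⊆ 𝓑 ∧ S.card = (k : ℕ) + 1 ∧ V = US M t 𝓑 S},
    ?_, ?_, ?_, ?_⟩
  · rintro k V ⟨S, -, -, rfl⟩
    exact isOpen_US M t 𝓑 S
  · rintro k V ⟨S, hSsub, hScard, rfl⟩
    obtain ⟨B₀, hB₀S⟩ := Finset.card_pos.mp (by omega : 0 < S.card)
    have hB₀ : B₀ ∈ 𝓑 := hSsub hB₀S
    have hnear : ∀ x ∈ US M t 𝓑 S, ∃ b ∈ B₀, dist x b ≤ M := by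
      intro x hx
      have h1 : gS M 𝓑 S x + t / 2 < tau M B₀ x := hx B₀ hB₀S
      have h2 : 0 < tau M B₀ x :=
        lt_of_le_of_lt (by linarith [gS_nonneg M 𝓑 S x]) h1
      have h3 : Metric.infDist x B₀ < M := by
        by_contra h; push_neg at h
        rw [tau, max_eq_right (by linarith)] at h2
        exact lt_irrefl _ h2
      obtain ⟨b, hb, hbd⟩ := (Metric.infDist_lt_iff hB₀.2).mp h3
      exact ⟨b, hb, hbd.le⟩
    refine EMetric.diam_le (fun x hx y hy => ?_)
    obtain ⟨bx, hbx, hdx⟩ := hnear x hx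
    obtain ⟨by', hby, hdy⟩ := hnear y hy
    calc edist x y ≤ edist x bx + edist bx by' + edist by' y := edist_triangle4 _ _ _ _
      _ ≤ ENNReal.ofReal M + ENNReal.ofReal (C * (2 * M)) + ENNReal.ofReal M := by
          gcongr
          · rw [edist_dist]; exact ENNReal.ofReal_le_ofReal hdx
          · exact le_trans (EMetric.edist_le_diam_of_mem hbx hby) (hdiam B₀ (h𝓑sub hB₀))
          · rw [edist_dist]; exact ENNReal.ofReal_le_ofReal (by rw [dist_comm]; exact hdy)
      _ = ENNReal.ofReal (M + C * (2 * M) + M) := by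
          rw [← ENNReal.ofReal_add (by positivity) (by positivity),
            ← ENNReal.ofReal_add (by positivity) (by positivity)]
      _ ≤ ENNReal.ofReal (6 * (C + 1) * ((n : ℝ) + 2) * t) :=
          ENNReal.ofReal_le_ofReal (le_of_eq (by rw [hMdef]; ring))
  · intro k E hE
    rw [Set.encard_le_one_iff]
    rintro V₁ V₂ ⟨⟨S₁, hS₁sub, hS₁card, rfl⟩, x, hxV, hxE⟩ ⟨⟨S₂, hS₂sub, hS₂card, rfl⟩, y, hyV, hyE⟩
    by_cases hSS : S₁ = S₂
    · rw [hSS]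
    · exfalso
      obtain ⟨B, hBS₁, hBS₂⟩ := Finset.not_subset.mp
        (fun h => hSS (Finset.eq_of_subset_of_card_le h (by omega)))
      obtain ⟨B', hB'S₂, hB'S₁⟩ := Finset.not_subset.mp
        (fun h => hSS (Finset.eq_of_subset_of_card_le h (by omega)).symm)
      have h1 : gS M 𝓑 S₁ x + t / 2 < tau M B x := hxV B hBS₁
      have h2 : tau M B' x ≤ gS M 𝓑 S₁ x := le_gS (hS₂sub hB'S₂) hB'S₁
      have h3 : gS M 𝓑 S₂ y + t / 2 < tau M B' y := hyV B' hB'S₂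
      have h4 : tau M B y ≤ gS M 𝓑 S₂ y := le_gS (hS₁sub hBS₁) hBS₂
      have h5 : tau M B x ≤ tau M B y + dist x y := tau_lip _ _ _ _
      have h6 : tau M B' y ≤ tau M B' x + dist y x := tau_lip _ _ _ _
      have hd : dist x y ≤ t / 2 := by
        have hh := (EMetric.edist_le_diam_of_mem hxE hyE).trans hE
        rw [edist_dist] at hh
        exact (ENNReal.ofReal_le_ofReal_iff (by positivity)).mp hh
      rw [dist_comm y x] at h6
      linarith
  · intro x
    have hx' : x ∈ ⋃₀ 𝓑₀ := by rw [hcov]; trivial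
    obtain ⟨B₀, hB₀0, hxB₀⟩ := hx'
    have hB₀ : B₀ ∈ 𝓑 := ⟨hB₀0, ⟨x, hxB₀⟩⟩
    have htB₀ : tau M B₀ x = M := tau_mem hM0.le hxB₀
    have hPfin : {B ∈ 𝓑 | 0 < tau M B x}.Finite := by
      refine Set.encard_lt_top_iff.mp (lt_of_le_of_lt (hP x) ?_)
      exact_mod_cast lt_top_iff_ne_top.mpr (ENat.coe_ne_top (n + 1))
    set PF := hPfin.toFinset with hPF
    have hPFcard : PF.card ≤ n + 1 := by
      have h1 : ({B ∈ 𝓑 | 0 < tau M B x}).encard = (PF.card : ℕ∞) :=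
        Set.Finite.encard_eq_coe_toFinset_card hPfin
      have h2 := hP x
      rw [h1] at h2
      exact_mod_cast h2
    have hB₀PF : B₀ ∈ PF := hPfin.mem_toFinset.mpr ⟨hB₀, by rw [htB₀]; exact hM0⟩
    set a : ℕ → ℝ := fun i => M - 3 * t * i with ha
    have ha_anti : ∀ i j : ℕ, i ≤ j → a j ≤ a i := by
      intro i j hij
      have hij' : (i : ℝ) ≤ j := by exact_mod_cast hij
      simp only [ha]
      nlinarith
    have ha1 : a 1 = M - 3 * t := by simp [ha]
    have han2 : a (n + 2) = 0 := by
      simp only [ha, hMdef]; push_cast; ring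
    have hgap : ∃ k : ℕ, 1 ≤ k ∧ k ≤ n + 1 ∧
        ∀ B ∈ PF, ¬(a (k + 1) < tau M B x ∧ tau M B x ≤ a k) := by
      by_contra hcon
      push_neg at hcon
      have hcon' : ∀ k : ℕ, ∃ B, 1 ≤ k → k ≤ n + 1 →
          B ∈ PF ∧ a (k + 1) < tau M B x ∧ tau M B x ≤ a k := by
        intro k
        by_cases h1 : 1 ≤ k
        · by_cases h2 : k ≤ n + 1
          · obtain ⟨B, hBPF, hB⟩ := hcon k h1 h2
            exact ⟨B, fun _ _ => ⟨hBPF, hB⟩⟩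
          · exact ⟨∅, fun _ h => absurd h h2⟩
        · exact ⟨∅, fun h => absurd h h1⟩
      choose f hf using hcon'
      have hinj : Set.InjOn f ↑(Finset.Icc 1 (n + 1)) := by
        intro i hi j hj hij
        simp only [Finset.coe_Icc, Set.mem_Icc] at hi hj
        by_contra hne
        rcases Nat.lt_or_ge i j with h | h
        · obtain ⟨-, hil, -⟩ := hf i hi.1 hi.2
          obtain ⟨-, -, hju⟩ := hf j hj.1 hj.2
          have h8 : a j ≤ a (i + 1) := ha_anti _ _ (by omega)
          rw [hij] at hil
          linarith
        · have h' : j < i := by omega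
          obtain ⟨-, hjl, -⟩ := hf j hj.1 hj.2
          obtain ⟨-, -, hiu⟩ := hf i hi.1 hi.2
          have h8 : a i ≤ a (j + 1) := ha_anti _ _ (by omega)
          rw [hij] at hiu
          linarith
      have hsub : ∀ kk ∈ Finset.Icc 1 (n + 1), f kk ∈ PF.erase B₀ := by
        intro kk hkk
        obtain ⟨hk1', hk2'⟩ := Finset.mem_Icc.mp hkk
        obtain ⟨hfP, hfl, hfu⟩ := hf kk hk1' hk2'
        refine Finset.mem_erase.mpr ⟨?_, hfP⟩
        intro he
        rw [he, htB₀] at hfu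
        have h10 : a kk ≤ M - 3 * t := by rw [← ha1]; exact ha_anti _ _ hk1'
        linarith
      have hcard := Finset.card_le_card_of_injOn f hsub hinj
      rw [Nat.card_Icc, Finset.card_erase_of_mem hB₀PF] at hcard
      omega
    obtain ⟨k, hk1, hk2, hgapk⟩ := hgap
    have hak1 : a (k + 1) = a k - 3 * t := by simp only [ha]; push_cast; ring
    have hak1nn : 0 ≤ a (k + 1) := by
      rw [← han2]; exact ha_anti _ _ (by omega)
    set Sx : Finset (Set X) := PF.filter (fun B => a k < tau M B x) with hSx
    have hSsub : (↑Sx : Set (Set X)) ⊆ 𝓑 := by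
      intro B hB
      have h1 := Finset.mem_filter.mp hB
      exact (hPfin.mem_toFinset.mp h1.1).1
    have hB₀Sx : B₀ ∈ Sx := by
      refine Finset.mem_filter.mpr ⟨hB₀PF, ?_⟩
      rw [htB₀]
      have h10 : a k ≤ M - 3 * t := by rw [← ha1]; exact ha_anti _ _ hk1
      linarith
    have hcard1 : 1 ≤ Sx.card := Finset.card_pos.mpr ⟨B₀, hB₀Sx⟩
    have hcard2 : Sx.card ≤ n + 1 := le_trans (Finset.card_filter_le _ _) hPFcard
    have hub : ∀ B ∈ 𝓑 \ (↑Sx : Set (Set X)), tau M B x ≤ a (k + 1) := by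
      rintro B ⟨hB𝓑, hBS⟩
      by_contra hcon
      push_neg at hcon
      have hpos : 0 < tau M B x := lt_of_le_of_lt hak1nn hcon
      have hBPF : B ∈ PF := hPfin.mem_toFinset.mpr ⟨hB𝓑, hpos⟩
      have hg := hgapk B hBPF
      push_neg at hg
      exact hBS (Finset.mem_coe.mpr (Finset.mem_filter.mpr ⟨hBPF, hg hcon⟩))
    have hball : Metric.closedBall x t ⊆ US M t 𝓑 Sx := by
      intro y hy
      have hdxy : dist y x ≤ t := Metric.mem_closedBall.mp hy
      intro B hBSx
      have hBx : a k < tau M B x := (Finset.mem_filter.mp hBSx).2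
      have h5 : tau M B x ≤ tau M B y + dist x y := tau_lip _ _ _ _
      have hgy : gS M 𝓑 Sx y ≤ a (k + 1) + t := by
        refine gS_le (by linarith) (fun B' hB' => ?_)
        have h7 := hub B' hB'
        have h6 : tau M B' y ≤ tau M B' x + dist y x := tau_lip _ _ _ _
        linarith
      rw [dist_comm] at h5
      linarith
    exact ⟨⟨Sx.card - 1, by omega⟩, US M t 𝓑 Sx,
      ⟨Sx, hSsub, by simp only [Fin.val_mk]; omega, rfl⟩, hball⟩

end AdjCov

/-- Adjusted Lang–Schlichenmaier coverings: if `X` has Nagata dimension at most `n` with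
constant `C`, there are constants `c ≥ 1` and `r₀ > 0` depending only on `n` and `C` such
that for every `r ≥ r₀` there are coverings `𝓑ʲ` (`j ∈ ℤ`) of `X`, each a union of `n + 1`
families `𝓑ʲₖ` of open sets that are `c·rʲ`-bounded and of `rʲ/2`-multiplicity at most `1`,
such that every closed ball of radius `rʲ` is contained in a member of `𝓑ʲ`. -/
theorem exists_adjusted_coverings (n : ℕ) (C : ℝ) (hC : 0 < C) :
    ∃ c : ℝ, 1 ≤ c ∧ ∃ r₀ : ℝ, 0 < r₀ ∧
      ∀ (X : Type) [MetricSpace X], NagataWith X n C →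
        ∀ r : ℝ, r₀ ≤ r →
          ∃ 𝓑 : ℤ → Fin (n + 1) → Set (Set X),
            (∀ (j : ℤ) (k : Fin (n + 1)), ∀ B ∈ 𝓑 j k, IsOpen B) ∧
            (∀ (j : ℤ) (k : Fin (n + 1)), ∀ B ∈ 𝓑 j k,
                EMetric.diam B ≤ ENNReal.ofReal (c * r ^ j)) ∧
            (∀ (j : ℤ) (k : Fin (n + 1)) (E : Set X),
                EMetric.diam E ≤ ENNReal.ofReal (r ^ j / 2) →
                  {B ∈ 𝓑 j k | (B ∩ E).Nonempty}.encard ≤ 1) ∧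
            ∀ (j : ℤ) (x : X), ∃ (k : Fin (n + 1)), ∃ B ∈ 𝓑 j k,
              Metric.closedBall x (r ^ j) ⊆ B := by

  refine ⟨6 * (C + 1) * ((n : ℝ) + 2), ?_, 1, one_pos, ?_⟩
  · have hn : (0 : ℝ) ≤ n := Nat.cast_nonneg n
    nlinarith
  intro X _ hX r hr
  have hr0 : (0 : ℝ) < r := lt_of_lt_of_le one_pos hr
  have H : ∀ j : ℤ, ∃ 𝓕 : Fin (n + 1) → Set (Set X),
      (∀ k, ∀ B ∈ 𝓕 k, IsOpen B) ∧
      (∀ k, ∀ B ∈ 𝓕 k,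
        EMetric.diam B ≤ ENNReal.ofReal (6 * (C + 1) * ((n : ℝ) + 2) * r ^ j)) ∧
      (∀ k (E : Set X), EMetric.diam E ≤ ENNReal.ofReal (r ^ j / 2) →
        {B ∈ 𝓕 k | (B ∩ E).Nonempty}.encard ≤ 1) ∧
      (∀ x : X, ∃ k, ∃ B ∈ 𝓕 k, Metric.closedBall x (r ^ j) ⊆ B) :=
    fun j => AdjCov.key n hC X hX (zpow_pos hr0 j)
  choose 𝓕 h1 h2 h3 h4 using H
  exact ⟨𝓕, h1, h2, h3, h4⟩
end

section
/- Let X be a metric space, n ∈ ℕ, r > 0, and j ∈ ℤ. For each k ∈ {0,…,n}, let B^j_k be a family of open subsets of X such that every point of X belongs to at most one member of B^j_k. For B ∈ B^j_k define ψ_B(x) = min{1, r^{-j}·dist(x, X∖B)}, let e_0 = 0 ∈ ℝ^n and let e_1,…,e_n be an orthonormal basis of ℝ^n, and define φ^j : X → ℝ^n by φ^j(x) = Σ_{k=0}^n (Σ_{B ∈ B^j_k} ψ_B(x))·e_k (at each point at most one summand of each inner sum is nonzero). Then |φ^j(x)| ≤ n+1 for all x ∈ X, and φ^j is Lipschitz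 with constant at most 2(n+1)·r^{-j}. -/
open Metric Set
open scoped ENNReal NNReal

/-- `snowPsi t B x = min {1, t * dist(x, X \\ B)}` (with the convention
`dist(x, ∅) = ∞`, so that `snowPsi t univ x = 1`). -/
noncomputable def snowPsi {X : Type*} [PseudoMetricSpace X] (t : ℝ) (B : Set X) (x : X) : ℝ :=
  (min 1 (ENNReal.ofReal t * EMetric.infEdist x Bᶜ)).toReal

section aux
variable {X : Type*} [PseudoMetricSpace X]

lemma snowPsi_nonneg (t : ℝ) (B : Set X) (x : X) : 0 ≤ snowPsi t B x :=
  ENNReal.toReal_nonneg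

lemma snowPsi_le_one (t : ℝ) (B : Set X) (x : X) : snowPsi t B x ≤ 1 := by
  have h : (min 1 (ENNReal.ofReal t * EMetric.infEdist x Bᶜ)) ≤ (1 : ℝ≥0∞) := min_le_left _ _
  calc snowPsi t B x ≤ (1 : ℝ≥0∞).toReal := ENNReal.toReal_mono (by simp) h
    _ = 1 := by simp

lemma snowPsi_eq_zero_of_notMem (t : ℝ) {B : Set X} {x : X} (hx : x ∉ B) :
    snowPsi t B x = 0 := by
  have h : EMetric.infEdist x Bᶜ = 0 := EMetric.infEdist_zero_of_mem (by exact hx)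
  unfold snowPsi
  rw [h, mul_zero]
  simp

lemma snowPsi_sub_le {t : ℝ} (ht : 0 ≤ t) (B : Set X) (x y : X) :
    snowPsi t B x - snowPsi t B y ≤ t * dist x y := by
  set c : ℝ≥0∞ := ENNReal.ofReal t with hc
  have h1 : EMetric.infEdist x Bᶜ ≤ EMetric.infEdist y Bᶜ + edist x y :=
    EMetric.infEdist_le_infEdist_add_edist
  have hce : c * edist x y = ENNReal.ofReal (t * dist x y) := by
    rw [edist_dist, ← ENNReal.ofReal_mul ht]
  have key : min 1 (c * EMetric.infEdist x Bᶜ)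
      ≤ min 1 (c * EMetric.infEdist y Bᶜ) + ENNReal.ofReal (t * dist x y) := by
    calc min 1 (c * EMetric.infEdist x Bᶜ)
        ≤ min 1 (c * EMetric.infEdist y Bᶜ + c * edist x y) := by
          apply min_le_min le_rfl
          rw [← mul_add]
          exact mul_le_mul_right h1 c
      _ ≤ min (1 + c * edist x y) (c * EMetric.infEdist y Bᶜ + c * edist x y) :=
          min_le_min le_self_add le_rfl
      _ = min 1 (c * EMetric.infEdist y Bᶜ) + c * edist x y := (min_add_add_right _ _ _)
      _ = min 1 (c * EMetric.infEdist y Bᶜ) + ENNReal.ofReal (t * dist x y) := by rw [hce]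
  have hfin : min 1 (c * EMetric.infEdist y Bᶜ) + ENNReal.ofReal (t * dist x y) ≠ ⊤ := by
    apply ENNReal.add_ne_top.2
    exact ⟨ne_top_of_le_ne_top (by simp) (min_le_left _ _), ENNReal.ofReal_ne_top⟩
  have h2 := ENNReal.toReal_mono hfin key
  rw [ENNReal.toReal_add (ne_top_of_le_ne_top (by simp) (min_le_left _ _))
    ENNReal.ofReal_ne_top, ENNReal.toReal_ofReal (mul_nonneg ht dist_nonneg)] at h2
  unfold snowPsi
  linarith

end aux

/-- Properties of `φʲ(x) = ∑ₖ (∑_{B ∈ 𝓑ₖ} ψ_B(x)) • eₖ`, where `e₀ = 0`, `e₁, …, eₙ` is an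
orthonormal basis of `ℝⁿ`, every point lies in at most one member of each family `𝓑ₖ`, and
`ψ_B(x) = min {1, r⁻ʲ · dist(x, X \\ B)}`: then `‖φʲ(x)‖ ≤ n + 1` and `φʲ` is Lipschitz
with constant at most `2(n+1) r⁻ʲ`. -/
theorem phi_basic_properties {X : Type*} [MetricSpace X] (n : ℕ) (r : ℝ) (hr : 0 < r) (j : ℤ)
    (𝓑 : Fin (n + 1) → Set (Set X))
    (hopen : ∀ k, ∀ B ∈ 𝓑 k, IsOpen B)
    (hdisj : ∀ (k : Fin (n + 1)) (x : X), {B ∈ 𝓑 k | x ∈ B}.Subsingleton)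
    (e : Fin (n + 1) → EuclideanSpace ℝ (Fin n)) (he0 : e 0 = 0)
    (b : OrthonormalBasis (Fin n) ℝ (EuclideanSpace ℝ (Fin n)))
    (heb : ∀ i : Fin n, e i.succ = b i)
    (φ : X → EuclideanSpace ℝ (Fin n))
    (hφ : ∀ x, φ x = ∑ k : Fin (n + 1),
        (∑' B : 𝓑 k, snowPsi (r ^ (-j)) (B : Set X) x) • e k) :
    (∀ x : X, ‖φ x‖ ≤ n + 1) ∧
      LipschitzWith (Real.toNNReal (2 * (n + 1) * r ^ (-j))) φ := by
  set t : ℝ := r ^ (-j) with htdef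
  have ht : 0 < t := zpow_pos hr _
  set g : Fin (n + 1) → X → ℝ := fun k x => ∑' B : 𝓑 k, snowPsi t (B : Set X) x with hg
  have hsupp : ∀ (k : Fin (n + 1)) (x : X),
      (Function.support fun B : 𝓑 k => snowPsi t (B : Set X) x).Subsingleton := by
    intro k x B₁ h₁ B₂ h₂
    have m₁ : (B₁ : Set X) ∈ {B ∈ 𝓑 k | x ∈ B} :=
      ⟨B₁.2, by_contra fun h => h₁ (snowPsi_eq_zero_of_notMem t h)⟩
    have m₂ : (B₂ : Set X) ∈ {B ∈ 𝓑 k | x ∈ B} :=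
      ⟨B₂.2, by_contra fun h => h₂ (snowPsi_eq_zero_of_notMem t h)⟩
    exact Subtype.ext (hdisj k x m₁ m₂)
  have hsummable : ∀ (k : Fin (n + 1)) (x : X),
      Summable fun B : 𝓑 k => snowPsi t (B : Set X) x := by
    intro k x
    exact summable_of_finite_support ((hsupp k x).finite)
  have hg_nonneg : ∀ k x, 0 ≤ g k x := fun k x =>
    tsum_nonneg fun B => snowPsi_nonneg t _ x
  have hg_le_one : ∀ k x, g k x ≤ 1 := by
    intro k x
    rcases (hsupp k x).eq_empty_or_singleton with hs | ⟨B₀, hs⟩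
    · have hz : ∀ B : 𝓑 k, snowPsi t (B : Set X) x = 0 := by
        intro B
        by_contra h
        have hmem : B ∈ Function.support fun B : 𝓑 k => snowPsi t (B : Set X) x := h
        rw [hs] at hmem
        exact notMem_empty B hmem
      have hx0 : g k x = 0 := by
        calc g k x = ∑' _B : 𝓑 k, (0 : ℝ) := tsum_congr hz
          _ = 0 := tsum_zero
      linarith
    · have hq : g k x = snowPsi t (B₀ : Set X) x := by
        apply tsum_eq_single
        intro B hB
        by_contra h
        exact hB (Set.eq_of_mem_singleton (hs ▸ Function.mem_support.2 h))
      rw [hq]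
      exact snowPsi_le_one _ _ _
  have hg_lip : ∀ k x y, g k x - g k y ≤ t * dist x y := by
    intro k x y
    rcases (hsupp k x).eq_empty_or_singleton with hs | ⟨B₀, hs⟩
    · have hz : ∀ B : 𝓑 k, snowPsi t (B : Set X) x = 0 := by
        intro B
        by_contra h
        have hmem : B ∈ Function.support fun B : 𝓑 k => snowPsi t (B : Set X) x := h
        rw [hs] at hmem
        exact notMem_empty B hmem
      have hx0 : g k x = 0 := by
        calc g k x = ∑' _B : 𝓑 k, (0 : ℝ) := tsum_congr hz
          _ = 0 := tsum_zero
      rw [hx0]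
      have h1 := hg_nonneg k y
      nlinarith [mul_nonneg ht.le (dist_nonneg (x := x) (y := y))]
    · have hx : g k x = snowPsi t (B₀ : Set X) x := by
        apply tsum_eq_single
        intro B hB
        by_contra h
        exact hB (Set.eq_of_mem_singleton (hs ▸ Function.mem_support.2 h))
      have hy : snowPsi t (B₀ : Set X) y ≤ g k y :=
        Summable.le_tsum (hsummable k y) B₀ fun B _ => snowPsi_nonneg t _ y
      have h3 := snowPsi_sub_le ht.le (B₀ : Set X) x y
      rw [hx]; linarith
  have hg_abs : ∀ k x y, |g k x - g k y| ≤ t * dist x y := by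
    intro k x y
    rw [abs_sub_le_iff]
    refine ⟨hg_lip k x y, ?_⟩
    rw [dist_comm]
    exact hg_lip k y x
  have he_norm : ∀ k, ‖e k‖ ≤ 1 := by
    intro k
    induction k using Fin.cases with
    | zero => simp [he0]
    | succ i =>
        rw [heb i]
        exact le_of_eq (b.orthonormal.1 i)
  have hnorm : ∀ x : X, ‖φ x‖ ≤ n + 1 := by
    intro x
    rw [hφ x]
    calc ‖∑ k : Fin (n + 1), g k x • e k‖ ≤ ∑ k : Fin (n + 1), ‖g k x • e k‖ :=
        norm_sum_le _ _
      _ ≤ ∑ _k : Fin (n + 1), (1 : ℝ) := by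
          refine Finset.sum_le_sum fun k _ => ?_
          rw [norm_smul]
          have h1 : ‖g k x‖ ≤ 1 := by
            rw [Real.norm_eq_abs, abs_of_nonneg (hg_nonneg k x)]
            exact hg_le_one k x
          have h2 := mul_le_mul h1 (he_norm k) (norm_nonneg _) zero_le_one
          linarith
      _ = n + 1 := by simp
  refine ⟨hnorm, ?_⟩
  apply LipschitzWith.of_dist_le_mul
  intro x y
  have hcoe : ((Real.toNNReal (2 * (n + 1) * t)) : ℝ) = 2 * (n + 1) * t := by
    rw [Real.coe_toNNReal]
    positivity
  rw [dist_eq_norm, hφ x, hφ y, ← Finset.sum_sub_distrib, hcoe]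
  have heq : ∀ k ∈ Finset.univ, g k x • e k - g k y • e k = (g k x - g k y) • e k := by
    intro k _
    rw [sub_smul]
  rw [Finset.sum_congr rfl heq]
  calc ‖∑ k : Fin (n + 1), (g k x - g k y) • e k‖
      ≤ ∑ k : Fin (n + 1), ‖(g k x - g k y) • e k‖ := norm_sum_le _ _
    _ ≤ ∑ _k : Fin (n + 1), t * dist x y := by
        refine Finset.sum_le_sum fun k _ => ?_
        rw [norm_smul]
        have h1 : ‖g k x - g k y‖ ≤ t * dist x y := by
          rw [Real.norm_eq_abs]
          exact hg_abs k x y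
        have h2 := mul_le_mul h1 (he_norm k) (norm_nonneg _)
          (mul_nonneg ht.le dist_nonneg)
        linarith
    _ = (n + 1) * (t * dist x y) := by
        rw [Finset.sum_const]
        simp [mul_comm]
    _ ≤ 2 * (n + 1) * t * dist x y := by
        have hX : 0 ≤ ((n : ℝ) + 1) * (t * dist x y) :=
          mul_nonneg (by positivity) (mul_nonneg ht.le dist_nonneg)
        have h2 : 2 * ((n : ℝ) + 1) * t * dist x y
            = ((n : ℝ) + 1) * (t * dist x y) + ((n : ℝ) + 1) * (t * dist x y) := by ring
        linarith [hX, h2]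
end

section
/- Let (X,d) be a metric space, n ∈ ℕ, r > 1, ε ∈ (0,1), and x₀ ∈ X. For each j ∈ ℤ, let φ^j : X → ℝ^n satisfy |φ^j(x)| ≤ n+1 for all x ∈ X and be Lipschitz with constant at most 2(n+1)·r^{-j}. Then for every x ∈ X the series f(x) = Σ_{j∈ℤ} r^{jε}·(φ^j(x) − φ^j(x₀)) converges absolutely, and the resulting map f : (X,d^ε) → ℝ^n is Lipschitz, with Lipschitz constant bounded above by a quantity depending only on r, n, and ε. -/
open Metric Set
open scoped ENNReal NNReal

lemma two_sided_geom (C a b : ℝ) (ha0 : 0 ≤ a) (ha1 : a < 1) (hb0 : 0 ≤ b) (hb1 : b < 1)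
    (j₀ : ℤ) :
    HasSum (fun j : ℤ => if j ≤ j₀ then C * a ^ (j₀ - j).toNat else C * b ^ (j - (j₀ + 1)).toNat)
      (C * (1 - b)⁻¹ + C * (1 - a)⁻¹) := by
  have hf : HasSum (fun n : ℕ => C * b ^ n) (C * (1 - b)⁻¹) :=
    (hasSum_geometric_of_lt_one hb0 hb1).mul_left C
  have hg : HasSum (fun n : ℕ => C * a ^ n) (C * (1 - a)⁻¹) :=
    (hasSum_geometric_of_lt_one ha0 ha1).mul_left C
  have h := hf.int_rec hg
  apply (Equiv.addRight (j₀ + 1)).hasSum_iff.mp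
  convert h using 1
  funext k
  simp only [Function.comp, Equiv.coe_addRight]
  cases k with
  | ofNat m =>
      have h1 : ¬ ((Int.ofNat m) + (j₀ + 1) ≤ j₀) := by
        simp only [Int.ofNat_eq_natCast]; omega
      simp only [h1, if_false]
      show C * b ^ _ = C * b ^ m
      congr 1
      simp only [Int.ofNat_eq_natCast]
      congr 1
      omega
  | negSucc m =>
      have h1 : (Int.negSucc m) + (j₀ + 1) ≤ j₀ := by
        simp only [Int.negSucc_eq]; omega
      simp only [h1, if_true]
      show C * a ^ _ = C * a ^ m
      congr 1
      simp only [Int.negSucc_eq]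
      congr 1
      omega

lemma key_bound (n : ℕ) (r : ℝ) (hr : 1 < r) (ε : ℝ) (hε0 : 0 < ε) (hε1 : ε < 1)
    {X : Type} [MetricSpace X] (φ : ℤ → X → EuclideanSpace ℝ (Fin n))
    (hb : ∀ (j : ℤ) (x : X), ‖φ j x‖ ≤ n + 1)
    (hl : ∀ j : ℤ, LipschitzWith (Real.toNNReal (2 * (n + 1) * r ^ (-j))) (φ j))
    (x y : X) :
    Summable (fun j : ℤ => ‖(r ^ ((j : ℝ) * ε)) • (φ j x - φ j y)‖) ∧
    ∑' j : ℤ, ‖(r ^ ((j : ℝ) * ε)) • (φ j x - φ j y)‖ ≤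
      (2 * ((n : ℝ) + 1) * ((1 - r ^ (ε - 1))⁻¹ + (1 - r ^ (-ε))⁻¹)) * dist x y ^ ε := by
  have hr0 : (0:ℝ) < r := lt_trans one_pos hr
  rcases eq_or_lt_of_le (dist_nonneg : 0 ≤ dist x y) with hd | hd
  · have hxy : x = y := by rw [← dist_eq_zero]; exact hd.symm
    subst hxy
    constructor
    · simp only [sub_self, smul_zero, norm_zero]
      exact summable_zero
    · simp [Real.zero_rpow hε0.ne']
  · set d := dist x y with hdd
    set j₀ : ℤ := ⌊Real.logb r d⌋ with hj₀
    have hlogb : r ^ (Real.logb r d) = d := Real.rpow_logb hr0 (ne_of_gt hr) hd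
    have h1 : r ^ ((j₀ : ℝ)) ≤ d := by
      calc r ^ ((j₀:ℝ)) ≤ r ^ Real.logb r d :=
            Real.rpow_le_rpow_of_exponent_le hr.le (Int.floor_le _)
      _ = d := hlogb
    have h2 : d ≤ r ^ ((j₀ : ℝ) + 1) := by
      calc d = r ^ Real.logb r d := hlogb.symm
      _ ≤ _ := Real.rpow_le_rpow_of_exponent_le hr.le (le_of_lt (Int.lt_floor_add_one _))
    set a : ℝ := r ^ (-ε) with haa
    set b : ℝ := r ^ (ε - 1) with hbb
    have ha0 : 0 ≤ a := (Real.rpow_pos_of_pos hr0 _).le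
    have hb0 : 0 ≤ b := (Real.rpow_pos_of_pos hr0 _).le
    have ha1 : a < 1 := Real.rpow_lt_one_of_one_lt_of_neg hr (by linarith)
    have hb1 : b < 1 := Real.rpow_lt_one_of_one_lt_of_neg hr (by linarith)
    set C : ℝ := 2 * ((n : ℝ) + 1) * d ^ ε with hCC
    have hC0 : 0 < C := by
      have : (0:ℝ) < d ^ ε := Real.rpow_pos_of_pos hd _
      positivity
    have hsum := two_sided_geom C a b ha0 ha1 hb0 hb1 j₀
    -- pointwise bound
    have hle : ∀ j : ℤ, ‖(r ^ ((j : ℝ) * ε)) • (φ j x - φ j y)‖ ≤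
        (if j ≤ j₀ then C * a ^ (j₀ - j).toNat else C * b ^ (j - (j₀ + 1)).toNat) := by
      intro j
      have hrpos : (0:ℝ) < r ^ ((j:ℝ) * ε) := Real.rpow_pos_of_pos hr0 _
      have hnorm : ‖(r ^ ((j : ℝ) * ε)) • (φ j x - φ j y)‖
          = r ^ ((j:ℝ) * ε) * ‖φ j x - φ j y‖ := by
        rw [norm_smul, Real.norm_eq_abs, abs_of_pos hrpos]
      have hΔ0 : 0 ≤ ‖φ j x - φ j y‖ := norm_nonneg _
      have hΔ1 : ‖φ j x - φ j y‖ ≤ 2 * ((n:ℝ) + 1) := by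
        calc ‖φ j x - φ j y‖ ≤ ‖φ j x‖ + ‖φ j y‖ := norm_sub_le _ _
        _ ≤ ((n:ℝ) + 1) + ((n:ℝ) + 1) := add_le_add (hb j x) (hb j y)
        _ = 2 * ((n:ℝ) + 1) := by ring
      have hKnn : (0:ℝ) ≤ 2 * ((n:ℝ) + 1) * r ^ (-j) := by positivity
      have hΔ2 : ‖φ j x - φ j y‖ ≤ 2 * ((n:ℝ) + 1) * r ^ (-(j:ℝ)) * d := by
        have h := (hl j).dist_le_mul x y
        rw [Real.coe_toNNReal _ hKnn, dist_eq_norm] at h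
        have hz : (r:ℝ) ^ (-j) = r ^ (-(j:ℝ)) := by
          rw [← Real.rpow_intCast r (-j)]; push_cast; ring_nf
        rw [hz] at h
        exact h
      by_cases hj : j ≤ j₀
      · rw [if_pos hj, hnorm]
        have hak : a ^ (j₀ - j).toNat = r ^ (((j₀:ℝ) - (j:ℝ)) * (-ε)) := by
          rw [haa, ← Real.rpow_natCast (r ^ (-ε)), ← Real.rpow_mul hr0.le]
          congr 1
          have : (((j₀ - j).toNat : ℤ) : ℝ) = (j₀:ℝ) - (j:ℝ) := by
            rw [Int.toNat_of_nonneg (by omega)]; push_cast; ring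
          push_cast at this ⊢
          rw [this]; ring
        have e1 : r ^ ((j₀:ℝ) * ε) ≤ d ^ ε := by
          rw [Real.rpow_mul hr0.le]
          exact Real.rpow_le_rpow (Real.rpow_pos_of_pos hr0 _).le h1 hε0.le
        have comb : r ^ ((j:ℝ) * ε) = r ^ ((j₀:ℝ) * ε) * r ^ (((j₀:ℝ) - (j:ℝ)) * (-ε)) := by
          rw [← Real.rpow_add hr0]; congr 1; ring
        have hq : (0:ℝ) < r ^ (((j₀:ℝ) - (j:ℝ)) * (-ε)) := Real.rpow_pos_of_pos hr0 _
        calc r ^ ((j:ℝ) * ε) * ‖φ j x - φ j y‖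
            ≤ r ^ ((j:ℝ) * ε) * (2 * ((n:ℝ) + 1)) :=
              mul_le_mul_of_nonneg_left hΔ1 hrpos.le
        _ = 2 * ((n:ℝ) + 1) * r ^ ((j₀:ℝ) * ε) * r ^ (((j₀:ℝ) - (j:ℝ)) * (-ε)) := by
              rw [comb]; ring
        _ ≤ 2 * ((n:ℝ) + 1) * d ^ ε * r ^ (((j₀:ℝ) - (j:ℝ)) * (-ε)) := by
              have : 2 * ((n:ℝ) + 1) * r ^ ((j₀:ℝ) * ε) ≤ 2 * ((n:ℝ) + 1) * d ^ ε := by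
                have h2n : (0:ℝ) ≤ 2 * ((n:ℝ) + 1) := by positivity
                exact mul_le_mul_of_nonneg_left e1 h2n
              exact mul_le_mul_of_nonneg_right this hq.le
        _ = C * a ^ (j₀ - j).toNat := by rw [hak, hCC]
      · rw [if_neg hj, hnorm]
        have hbk : b ^ (j - (j₀ + 1)).toNat = r ^ (((j:ℝ) - (j₀:ℝ) - 1) * (ε - 1)) := by
          rw [hbb, ← Real.rpow_natCast (r ^ (ε - 1)), ← Real.rpow_mul hr0.le]
          congr 1
          have : (((j - (j₀ + 1)).toNat : ℤ) : ℝ) = (j:ℝ) - (j₀:ℝ) - 1 := by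
            rw [Int.toNat_of_nonneg (by omega)]; push_cast; ring
          push_cast at this ⊢
          rw [this]; ring
        have e3 : d * r ^ (((j₀:ℝ) + 1) * (ε - 1)) ≤ d ^ ε := by
          have hA : r ^ (((j₀:ℝ) + 1) * (ε - 1)) ≤ d ^ (ε - 1) := by
            rw [Real.rpow_mul hr0.le]
            exact Real.rpow_le_rpow_of_nonpos hd h2 (by linarith)
          have hdd1 : d * d ^ (ε - 1) = d ^ ε := by
            rw [show ε = 1 + (ε - 1) by ring, Real.rpow_add hd, Real.rpow_one]
            ring_nf
          calc d * r ^ (((j₀:ℝ) + 1) * (ε - 1)) ≤ d * d ^ (ε - 1) :=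
                mul_le_mul_of_nonneg_left hA hd.le
          _ = d ^ ε := hdd1
        have comb : r ^ ((j:ℝ) * ε) * r ^ (-(j:ℝ))
            = r ^ (((j₀:ℝ) + 1) * (ε - 1)) * r ^ (((j:ℝ) - (j₀:ℝ) - 1) * (ε - 1)) := by
          rw [← Real.rpow_add hr0, ← Real.rpow_add hr0]; congr 1; ring
        have hq : (0:ℝ) < r ^ (((j:ℝ) - (j₀:ℝ) - 1) * (ε - 1)) := Real.rpow_pos_of_pos hr0 _
        calc r ^ ((j:ℝ) * ε) * ‖φ j x - φ j y‖
            ≤ r ^ ((j:ℝ) * ε) * (2 * ((n:ℝ) + 1) * r ^ (-(j:ℝ)) * d) :=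
              mul_le_mul_of_nonneg_left hΔ2 hrpos.le
        _ = 2 * ((n:ℝ) + 1) * (d * r ^ (((j₀:ℝ) + 1) * (ε - 1)))
              * r ^ (((j:ℝ) - (j₀:ℝ) - 1) * (ε - 1)) := by
              linear_combination (2 * ((n:ℝ) + 1) * d) * comb
        _ ≤ 2 * ((n:ℝ) + 1) * d ^ ε * r ^ (((j:ℝ) - (j₀:ℝ) - 1) * (ε - 1)) := by
              have h2n : (0:ℝ) ≤ 2 * ((n:ℝ) + 1) := by positivity
              have : 2 * ((n:ℝ) + 1) * (d * r ^ (((j₀:ℝ) + 1) * (ε - 1)))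
                  ≤ 2 * ((n:ℝ) + 1) * d ^ ε := mul_le_mul_of_nonneg_left e3 h2n
              exact mul_le_mul_of_nonneg_right this hq.le
        _ = C * b ^ (j - (j₀ + 1)).toNat := by rw [hbk, hCC]
    have hS : Summable (fun j : ℤ => ‖(r ^ ((j : ℝ) * ε)) • (φ j x - φ j y)‖) :=
      Summable.of_nonneg_of_le (fun j => norm_nonneg _) hle hsum.summable
    refine ⟨hS, ?_⟩
    calc ∑' j : ℤ, ‖(r ^ ((j : ℝ) * ε)) • (φ j x - φ j y)‖
        ≤ ∑' j : ℤ, (if j ≤ j₀ then C * a ^ (j₀ - j).toNat else C * b ^ (j - (j₀ + 1)).toNat) :=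
          Summable.tsum_le_tsum hle hS hsum.summable
    _ = C * (1 - b)⁻¹ + C * (1 - a)⁻¹ := hsum.tsum_eq
    _ = (2 * ((n : ℝ) + 1) * ((1 - r ^ (ε - 1))⁻¹ + (1 - r ^ (-ε))⁻¹)) * d ^ ε := by
          rw [hCC, haa, hbb]; ring
/-- If each `φʲ : X → ℝⁿ` is bounded by `n + 1` and Lipschitz with constant at most
`2(n+1) r⁻ʲ`, then `f(x) = ∑_{j∈ℤ} r^{jε} (φʲ(x) - φʲ(x₀))` converges absolutely and
defines a Lipschitz map from the snowflake `(X, d^ε)` to `ℝⁿ`, with Lipschitz constant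
depending only on `r`, `n` and `ε`. -/
theorem sum_of_bumps_lipschitz (n : ℕ) (r : ℝ) (hr : 1 < r) (ε : ℝ) (hε0 : 0 < ε)
    (hε1 : ε < 1) :
    ∃ L : ℝ, 0 < L ∧
      ∀ (X : Type) [MetricSpace X], ∀ φ : ℤ → X → EuclideanSpace ℝ (Fin n),
        (∀ (j : ℤ) (x : X), ‖φ j x‖ ≤ n + 1) →
        (∀ j : ℤ, LipschitzWith (Real.toNNReal (2 * (n + 1) * r ^ (-j))) (φ j)) →
        ∀ x₀ : X,
          (∀ x : X, Summable (fun j : ℤ => ‖(r ^ ((j : ℝ) * ε)) • (φ j x - φ j x₀)‖)) ∧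
          ∀ x y : X,
            ‖(∑' j : ℤ, (r ^ ((j : ℝ) * ε)) • (φ j x - φ j x₀))
                - (∑' j : ℤ, (r ^ ((j : ℝ) * ε)) • (φ j y - φ j x₀))‖
              ≤ L * dist x y ^ ε := by
  have ha1 : r ^ (-ε) < 1 := Real.rpow_lt_one_of_one_lt_of_neg hr (by linarith)
  have hb1 : r ^ (ε - 1) < 1 := Real.rpow_lt_one_of_one_lt_of_neg hr (by linarith)
  refine ⟨2 * ((n : ℝ) + 1) * ((1 - r ^ (ε - 1))⁻¹ + (1 - r ^ (-ε))⁻¹), ?_, ?_⟩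
  · have h1 : (0:ℝ) < (1 - r ^ (ε - 1))⁻¹ := inv_pos.mpr (by linarith)
    have h2 : (0:ℝ) < (1 - r ^ (-ε))⁻¹ := inv_pos.mpr (by linarith)
    positivity
  · intro X _ φ hb hl x₀
    constructor
    · intro x
      exact (key_bound n r hr ε hε0 hε1 φ hb hl x x₀).1
    · intro x y
      have sx := ((key_bound n r hr ε hε0 hε1 φ hb hl x x₀).1).of_norm
      have sy := ((key_bound n r hr ε hε0 hε1 φ hb hl y x₀).1).of_norm
      have hxy := key_bound n r hr ε hε0 hε1 φ hb hl x y
      have he : ∀ j : ℤ, (r ^ ((j : ℝ) * ε)) • (φ j x - φ j x₀)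
          - (r ^ ((j : ℝ) * ε)) • (φ j y - φ j x₀)
          = (r ^ ((j : ℝ) * ε)) • (φ j x - φ j y) := by
        intro j
        rw [← smul_sub]
        congr 1
        abel
      calc ‖(∑' j : ℤ, (r ^ ((j : ℝ) * ε)) • (φ j x - φ j x₀))
              - (∑' j : ℤ, (r ^ ((j : ℝ) * ε)) • (φ j y - φ j x₀))‖
          = ‖∑' j : ℤ, ((r ^ ((j : ℝ) * ε)) • (φ j x - φ j x₀)
              - (r ^ ((j : ℝ) * ε)) • (φ j y - φ j x₀))‖ := by
            rw [Summable.tsum_sub sx sy]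
      _ = ‖∑' j : ℤ, (r ^ ((j : ℝ) * ε)) • (φ j x - φ j y)‖ := by
            congr 1
            exact tsum_congr he
      _ ≤ ∑' j : ℤ, ‖(r ^ ((j : ℝ) * ε)) • (φ j x - φ j y)‖ :=
            norm_tsum_le_tsum_norm hxy.1
      _ ≤ _ := hxy.2
end

section
/- Let X be a compact, bounded turning metric space, Y a metric space, and f : X → Y a continuous map. Then for all x, y ∈ X, the infimum defining the pullback distance d_f(x,y) is achieved: there exists a continuum K ⊆ X containing x and y with diam(f(K)) = d_f(x,y). -/
open Metric Set
open scoped ENNReal NNReal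

/-- A continuum: a nonempty compact connected set. -/
def IsContinuum {X : Type*} [TopologicalSpace X] (K : Set X) : Prop :=
  IsCompact K ∧ IsConnected K

/-- `X` is `C`-bounded turning: every pair of points lies in a continuum of
diameter at most `C` times their distance. -/
def BoundedTurningWith (X : Type*) [PseudoMetricSpace X] (C : ℝ) : Prop :=
  ∀ x y : X, ∃ K : Set X, IsContinuum K ∧ x ∈ K ∧ y ∈ K ∧ Metric.diam K ≤ C * dist x y

/-- The Guo–Williams pullback distance associated to `f`:
`d_f(x,y) = inf {diam (f '' K) : K a continuum containing x and y}`. -/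
noncomputable def pullbackDist {X Y : Type*} [TopologicalSpace X] [PseudoMetricSpace Y]
    (f : X → Y) (x y : X) : ℝ :=
  sInf {t : ℝ | ∃ K : Set X, IsContinuum K ∧ x ∈ K ∧ y ∈ K ∧ t = Metric.diam (f '' K)}

/-- Finiteness of the Hausdorff edistance between nonempty compacts. -/
lemma nc_edist_ne_top {X : Type*} [MetricSpace X]
    (s t : TopologicalSpace.NonemptyCompacts X) :
    EMetric.hausdorffEdist (s : Set X) (t : Set X) ≠ ⊤ :=
  Metric.hausdorffEdist_ne_top_of_nonempty_of_bounded s.nonempty t.nonempty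
    s.isCompact.isBounded t.isCompact.isBounded

/-- A Hausdorff limit of connected nonempty compact sets is preconnected. -/
lemma isPreconnected_of_hausdorff_limit {X : Type*} [MetricSpace X]
    (A : ℕ → TopologicalSpace.NonemptyCompacts X) (L : TopologicalSpace.NonemptyCompacts X)
    (hconn : ∀ n, IsPreconnected (A n : Set X))
    (hlim : Filter.Tendsto (fun n => dist (A n) L) Filter.atTop (nhds 0)) :
    IsPreconnected (L : Set X) := by
  rw [isPreconnected_iff_subset_of_fully_disjoint_closed L.isCompact.isClosed]
  intro u v hu hv hsub hdisj
  by_contra hcon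
  push_neg at hcon
  obtain ⟨hnu, hnv⟩ := hcon
  obtain ⟨a, ha, hau⟩ := Set.not_subset.1 hnu
  obtain ⟨b, hb, hbv⟩ := Set.not_subset.1 hnv
  have hav : a ∈ v := (hsub ha).resolve_left hau
  have hbu : b ∈ u := (hsub hb).resolve_right hbv
  -- the two pieces of L
  set P : Set X := (L : Set X) ∩ u with hP
  set Q : Set X := (L : Set X) ∩ v with hQ
  have hPc : IsCompact P := L.isCompact.inter_right hu
  have hQc : IsCompact Q := L.isCompact.inter_right hv
  have hPQdisj : Disjoint P Q := hdisj.mono inter_subset_right inter_subset_right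
  have hPne : P.Nonempty := ⟨b, hb, hbu⟩
  have hQne : Q.Nonempty := ⟨a, ha, hav⟩
  have hPQ : (L : Set X) = P ∪ Q := by
    apply Set.Subset.antisymm
    · intro z hz
      rcases hsub hz with h | h
      · exact Or.inl ⟨hz, h⟩
      · exact Or.inr ⟨hz, h⟩
    · exact Set.union_subset inter_subset_left inter_subset_left
  obtain ⟨δ, hδpos, hth⟩ := hPQdisj.exists_thickenings hPc hQc.isClosed
  -- pick n with Hausdorff distance < δ
  have : ∀ᶠ n in Filter.atTop, dist (A n) L < δ := by
    have := Filter.Tendsto.eventually_lt_const hδpos hlim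
    simpa using this
  obtain ⟨n, hn⟩ := this.exists
  have hdLA : Metric.hausdorffDist (L : Set X) (A n : Set X) < δ := by
    rw [Metric.hausdorffDist_comm]
    exact hn
  have hdAL : Metric.hausdorffDist (A n : Set X) (L : Set X) < δ := hn
  -- A n is covered by the two thickenings
  have hcov : (A n : Set X) ⊆ Metric.thickening δ P ∪ Metric.thickening δ Q := by
    intro z hz
    obtain ⟨w, hw, hzw⟩ :=
      Metric.exists_dist_lt_of_hausdorffDist_lt hz hdAL (nc_edist_ne_top (A n) L)
    rw [hPQ] at hw
    rcases hw with h | h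
    · exact Or.inl (Metric.mem_thickening_iff.2 ⟨w, h, hzw⟩)
    · exact Or.inr (Metric.mem_thickening_iff.2 ⟨w, h, hzw⟩)
  -- A n meets both thickenings
  obtain ⟨p, hpP⟩ := hPne
  obtain ⟨p', hp'A, hpp'⟩ :=
    Metric.exists_dist_lt_of_hausdorffDist_lt hpP.1 hdLA (nc_edist_ne_top L (A n))
  have hmeet1 : ((A n : Set X) ∩ Metric.thickening δ P).Nonempty :=
    ⟨p', hp'A, Metric.mem_thickening_iff.2 ⟨p, hpP, by rwa [dist_comm]⟩⟩
  obtain ⟨q, hqQ⟩ := hQne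
  obtain ⟨q', hq'A, hqq'⟩ :=
    Metric.exists_dist_lt_of_hausdorffDist_lt hqQ.1 hdLA (nc_edist_ne_top L (A n))
  have hmeet2 : ((A n : Set X) ∩ Metric.thickening δ Q).Nonempty :=
    ⟨q', hq'A, Metric.mem_thickening_iff.2 ⟨q, hqQ, by rwa [dist_comm]⟩⟩
  obtain ⟨z, _, hz1, hz2⟩ := hconn n (Metric.thickening δ P) (Metric.thickening δ Q)
    Metric.isOpen_thickening Metric.isOpen_thickening hcov hmeet1 hmeet2
  exact Set.disjoint_iff.1 hth ⟨hz1, hz2⟩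

/-- For a compact bounded turning space and a continuous map, the infimum defining the
pullback distance is achieved by some continuum. -/
theorem pullbackDist_achieved {X Y : Type*} [MetricSpace X] [CompactSpace X] [MetricSpace Y]
    (C : ℝ) (hC : 1 ≤ C) (hbt : BoundedTurningWith X C)
    (f : X → Y) (hf : Continuous f) (x y : X) :
    ∃ K : Set X, IsContinuum K ∧ x ∈ K ∧ y ∈ K ∧
      Metric.diam (f '' K) = pullbackDist f x y := by
  classical
  set S : Set ℝ :=
    {t : ℝ | ∃ K : Set X, IsContinuum K ∧ x ∈ K ∧ y ∈ K ∧ t = Metric.diam (f '' K)} with hSdef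
  have hSne : S.Nonempty := by
    obtain ⟨K0, hK0, hx0, hy0, -⟩ := hbt x y
    exact ⟨Metric.diam (f '' K0), K0, hK0, hx0, hy0, rfl⟩
  have hSbdd : BddBelow S := by
    refine ⟨0, ?_⟩
    rintro t ⟨K, -, -, -, rfl⟩
    exact Metric.diam_nonneg
  set d : ℝ := pullbackDist f x y with hddef
  have hd0 : 0 ≤ d := le_csInf hSne (by rintro t ⟨K, -, -, -, rfl⟩; exact Metric.diam_nonneg)
  -- a minimizing sequence of continua
  have hseq : ∀ n : ℕ, ∃ K : Set X, IsContinuum K ∧ x ∈ K ∧ y ∈ K ∧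
      Metric.diam (f '' K) < d + 1 / (n + 1) := by
    intro n
    have hlt : sInf S < d + 1 / (n + 1) := by
      have : (0 : ℝ) < 1 / (n + 1) := by positivity
      have hdd : d = sInf S := rfl
      linarith [hdd]
    obtain ⟨t, ⟨K, hKc, hKx, hKy, rfl⟩, hts⟩ := exists_lt_of_csInf_lt hSne hlt
    exact ⟨K, hKc, hKx, hKy, hts⟩
  choose K hKcont hKx hKy hKdiam using hseq
  -- package as nonempty compacts
  set A : ℕ → TopologicalSpace.NonemptyCompacts X :=
    fun n => ⟨⟨K n, (hKcont n).1⟩, ⟨x, hKx n⟩⟩ with hAdef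
  -- extract a Hausdorff-convergent subsequence
  obtain ⟨L, φ, hφ, hconv⟩ := CompactSpace.tendsto_subseq A
  have hdist : Filter.Tendsto (fun n => dist (A (φ n)) L) Filter.atTop (nhds 0) :=
    tendsto_iff_dist_tendsto_zero.1 hconv
  -- membership of x and y in the limit
  have hmem : ∀ z : X, (∀ n, z ∈ K n) → z ∈ (L : Set X) := by
    intro z hz
    have hle : ∀ n, Metric.infDist z (L : Set X) ≤ dist (A (φ n)) L := by
      intro n
      have h1 : Metric.infDist z (L : Set X) ≤
          Metric.infDist z (A (φ n) : Set X) +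
            Metric.hausdorffDist (A (φ n) : Set X) (L : Set X) :=
        Metric.infDist_le_infDist_add_hausdorffDist (nc_edist_ne_top _ _)
      have h2 : Metric.infDist z (A (φ n) : Set X) = 0 :=
        Metric.infDist_zero_of_mem (hz (φ n))
      rw [h2, zero_add] at h1
      exact h1
    have : Metric.infDist z (L : Set X) ≤ 0 := ge_of_tendsto' hdist hle
    have hz0 : Metric.infDist z (L : Set X) = 0 := le_antisymm this Metric.infDist_nonneg
    exact (L.isCompact.isClosed.mem_iff_infDist_zero L.nonempty).2 hz0
  have hxL : x ∈ (L : Set X) := hmem x fun n => hKx n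
  have hyL : y ∈ (L : Set X) := hmem y fun n => hKy n
  -- the limit is a continuum
  have hLcont : IsContinuum (L : Set X) := by
    refine ⟨L.isCompact, L.nonempty, ?_⟩
    exact isPreconnected_of_hausdorff_limit (fun n => A (φ n)) L
      (fun n => ((hKcont (φ n)).2).isPreconnected) hdist
  -- diam (f '' L) ≤ d
  have hdiam_le : Metric.diam (f '' (L : Set X)) ≤ d := by
    apply Metric.diam_le_of_forall_dist_le hd0
    rintro _ ⟨p, hp, rfl⟩ _ ⟨q, hq, rfl⟩
    refine le_of_forall_pos_le_add fun ε hε => ?_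
    obtain ⟨δ, hδ, hδ'⟩ := Metric.uniformContinuous_iff.1
      (CompactSpace.uniformContinuous_of_continuous hf) (ε / 3) (by linarith)
    obtain ⟨N, hN⟩ := exists_nat_one_div_lt (show (0 : ℝ) < ε / 3 by linarith)
    have h1 : ∀ᶠ n in Filter.atTop, dist (A (φ n)) L < δ :=
      hdist.eventually_lt_const hδ
    obtain ⟨m, hm1, hm2⟩ := (h1.and (Filter.eventually_ge_atTop N)).exists
    -- distance between the sets is small
    have hdLA : Metric.hausdorffDist (L : Set X) (A (φ m) : Set X) < δ := by
      rw [Metric.hausdorffDist_comm]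
      exact hm1
    obtain ⟨p', hp'A, hpp'⟩ :=
      Metric.exists_dist_lt_of_hausdorffDist_lt hp hdLA (nc_edist_ne_top L (A (φ m)))
    obtain ⟨q', hq'A, hqq'⟩ :=
      Metric.exists_dist_lt_of_hausdorffDist_lt hq hdLA (nc_edist_ne_top L (A (φ m)))
    have hmid : dist (f p') (f q') ≤ Metric.diam (f '' K (φ m)) :=
      Metric.dist_le_diam_of_mem (((hKcont (φ m)).1.image hf).isBounded)
        ⟨p', hp'A, rfl⟩ ⟨q', hq'A, rfl⟩
    have hsmall : (1 : ℝ) / (φ m + 1) < ε / 3 := by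
      have h1 : (1 : ℝ) / (φ m + 1) ≤ 1 / (m + 1) := by
        apply one_div_le_one_div_of_le (by positivity)
        have hmφ : (m : ℝ) ≤ (φ m : ℝ) := by exact_mod_cast hφ.le_apply
        linarith
      have h2 : (1 : ℝ) / (m + 1) ≤ 1 / (N + 1) := by
        apply one_div_le_one_div_of_le (by positivity)
        have hNm : (N : ℝ) ≤ (m : ℝ) := by exact_mod_cast hm2
        linarith
      linarith [hN]
    calc dist (f p) (f q) ≤ dist (f p) (f p') + dist (f p') (f q') + dist (f q') (f q) :=
          dist_triangle4 _ _ _ _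
      _ ≤ ε / 3 + (Metric.diam (f '' K (φ m)))
            + ε / 3 := by
          have e1 : dist (f p) (f p') ≤ ε / 3 := le_of_lt (hδ' hpp')
          have e2 : dist (f q') (f q) ≤ ε / 3 := by
            rw [dist_comm]; exact le_of_lt (hδ' hqq')
          linarith [hmid]
      _ ≤ ε / 3 + (d + 1 / (φ m + 1)) + ε / 3 := by
          linarith [le_of_lt (hKdiam (φ m))]
      _ ≤ d + ε := by linarith [le_of_lt hsmall]
  -- d ≤ diam (f '' L)
  have hdiam_ge : d ≤ Metric.diam (f '' (L : Set X)) :=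
    csInf_le hSbdd ⟨(L : Set X), hLcont, hxL, hyL, rfl⟩
  exact ⟨(L : Set X), hLcont, hxL, hyL, le_antisymm hdiam_le hdiam_ge⟩
end

section
/- Let X be a bounded turning metric space and f : X → Y a non-constant branched quasisymmetry. Then f does not collapse any non-trivial continuum: for every non-trivial continuum E ⊆ X, diam(f(E)) > 0. -/
open Metric Set
open scoped ENNReal NNReal

/-- `η` is a (necessarily increasing) homeomorphism of `[0,∞)` onto itself. -/
def IsQSControl (η : ℝ → ℝ) : Prop :=
  ContinuousOn η (Set.Ici 0) ∧ StrictMonoOn η (Set.Ici 0) ∧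
    Set.MapsTo η (Set.Ici 0) (Set.Ici 0) ∧ Set.SurjOn η (Set.Ici 0) (Set.Ici 0)

/-- `f` is a branched quasisymmetry with control homeomorphism `η`:
`f` is continuous and distorts ratios of diameters of intersecting
non-trivial continua in a manner controlled by `η`. -/
def BranchedQS {X Y : Type*} [PseudoMetricSpace X] [PseudoMetricSpace Y]
    (η : ℝ → ℝ) (f : X → Y) : Prop :=
  Continuous f ∧ IsQSControl η ∧
    ∀ E E' : Set X, IsContinuum E → IsContinuum E' → E.Nontrivial → E'.Nontrivial →
      (E ∩ E').Nonempty →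
        Metric.diam (f '' E) ≤ η (Metric.diam E / Metric.diam E') * Metric.diam (f '' E')

/-- A non-constant branched quasisymmetry on a bounded turning space cannot collapse any
non-trivial continuum to a point. -/
theorem branchedQS_not_collapse {X Y : Type*} [MetricSpace X] [MetricSpace Y]
    (C : ℝ) (hC : 1 ≤ C) (hbt : BoundedTurningWith X C)
    (η : ℝ → ℝ) (f : X → Y) (hf : BranchedQS η f) (hnc : ∃ p q : X, f p ≠ f q)
    (E : Set X) (hE : IsContinuum E) (hnt : E.Nontrivial) :
    0 < Metric.diam (f '' E) := by
  by_contra h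
  push_neg at h
  have hz : Metric.diam (f '' E) = 0 := le_antisymm h Metric.diam_nonneg
  obtain ⟨x₀, hx₀, -, -, -⟩ := id hnt
  have key : ∀ x : X, f x = f x₀ := by
    intro x
    by_cases hx : x = x₀
    · rw [hx]
    obtain ⟨K, hK, hxK, hx₀K, -⟩ := hbt x x₀
    have hKnt : K.Nontrivial := ⟨x, hxK, x₀, hx₀K, hx⟩
    have hle := hf.2.2 K E hK hE hKnt hnt ⟨x₀, hx₀K, hx₀⟩
    rw [hz, mul_zero] at hle
    have hd : Metric.diam (f '' K) = 0 := le_antisymm hle Metric.diam_nonneg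
    have hbd : Bornology.IsBounded (f '' K) := (hK.1.image hf.1).isBounded
    have hdist : dist (f x) (f x₀) ≤ Metric.diam (f '' K) :=
      Metric.dist_le_diam_of_mem hbd ⟨x, hxK, rfl⟩ ⟨x₀, hx₀K, rfl⟩
    rw [hd] at hdist
    exact dist_le_zero.mp hdist
  obtain ⟨p, q, hpq⟩ := hnc
  exact hpq ((key p).trans (key q).symm)
end

section
/- Let X be a compact, bounded turning metric space with metric d, Y a metric space, and f : X → Y a non-constant branched quasisymmetry. Then the pullback distance d_f is a metric on X, and the identity map from (X,d) to (X,d_f) is a homeomorphism (the two metrics are topologically equivalent). -/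
open Metric Set
open scoped ENNReal NNReal

-- helper lemmas
lemma qsc_zero {η : ℝ → ℝ} (h : IsQSControl η) : η 0 = 0 := by
  obtain ⟨hc, hm, hmap, hsur⟩ := h
  have h0 : (0:ℝ) ∈ Set.Ici (0:ℝ) := Set.self_mem_Ici
  obtain ⟨t, ht, het⟩ := hsur h0
  have h1 : η 0 ≤ η t := hm.monotoneOn h0 ht ht
  have h2 : (0:ℝ) ≤ η 0 := hmap h0
  rw [het] at h1
  linarith

lemma qsc_pos {η : ℝ → ℝ} (h : IsQSControl η) {s : ℝ} (hs : 0 < s) : 0 < η s := by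
  have := h.2.1 Set.self_mem_Ici (le_of_lt hs) hs
  rwa [qsc_zero h] at this

lemma pullback_set_nonempty {X Y : Type*} [MetricSpace X] [MetricSpace Y] {C : ℝ}
    (hbt : BoundedTurningWith X C) (f : X → Y) (x y : X) :
    {t : ℝ | ∃ K : Set X, IsContinuum K ∧ x ∈ K ∧ y ∈ K ∧ t = Metric.diam (f '' K)}.Nonempty := by
  obtain ⟨K, hK, hx, hy, _⟩ := hbt x y
  exact ⟨_, K, hK, hx, hy, rfl⟩

lemma pullback_set_bddBelow {X Y : Type*} [MetricSpace X] [MetricSpace Y] (f : X → Y) (x y : X) :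
    BddBelow {t : ℝ | ∃ K : Set X, IsContinuum K ∧ x ∈ K ∧ y ∈ K ∧ t = Metric.diam (f '' K)} := by
  refine ⟨0, fun t ht => ?_⟩
  obtain ⟨K, _, _, _, rfl⟩ := ht
  exact Metric.diam_nonneg

lemma pullbackDist_nonneg {X Y : Type*} [MetricSpace X] [MetricSpace Y] {C : ℝ}
    (hbt : BoundedTurningWith X C) (f : X → Y) (x y : X) : 0 ≤ pullbackDist f x y :=
  le_csInf (pullback_set_nonempty hbt f x y) (fun t ht => by
    obtain ⟨K, _, _, _, rfl⟩ := ht; exact Metric.diam_nonneg)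

lemma pullbackDist_le {X Y : Type*} [MetricSpace X] [MetricSpace Y] (f : X → Y) {x y : X}
    {K : Set X} (hK : IsContinuum K) (hx : x ∈ K) (hy : y ∈ K) :
    pullbackDist f x y ≤ Metric.diam (f '' K) :=
  csInf_le (pullback_set_bddBelow f x y) ⟨K, hK, hx, hy, rfl⟩


lemma key_lower {X Y : Type*} [MetricSpace X] [CompactSpace X] [MetricSpace Y] {C : ℝ}
    (hbt : BoundedTurningWith X C) {η : ℝ → ℝ} {f : X → Y} (hf : BranchedQS η f)
    (hnc : ∃ p q : X, f p ≠ f q) (z : X) {ε : ℝ} (hε : 0 < ε) :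
    ∃ c > 0, ∀ a : X, ε ≤ dist a z → c ≤ pullbackDist f a z := by
  obtain ⟨hfc, hη, hqs⟩ := hf
  obtain ⟨p₀, q₀, hpq⟩ := hnc
  have hp₀q₀ : p₀ ≠ q₀ := fun h => hpq (by rw [h])
  obtain ⟨E', hE', hpE', hqE', _⟩ := hbt p₀ q₀
  have hE'nt : E'.Nontrivial := ⟨p₀, hpE', q₀, hqE', hp₀q₀⟩
  have hbd : ∀ S : Set X, Bornology.IsBounded S := fun S => Metric.isBounded_of_compactSpace
  have hE'pos : 0 < Metric.diam E' :=
    lt_of_lt_of_le (dist_pos.2 hp₀q₀) (Metric.dist_le_diam_of_mem (hbd E') hpE' hqE')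
  have hfE'pos : 0 < Metric.diam (f '' E') := by
    refine lt_of_lt_of_le (dist_pos.2 hpq) (Metric.dist_le_diam_of_mem ?_ ⟨p₀, hpE', rfl⟩ ⟨q₀, hqE', rfl⟩)
    exact (hE'.1.image hfc).isBounded
  obtain ⟨M, hM, hzM, hpM, hMnt, hMpos⟩ :
      ∃ M : Set X, IsContinuum M ∧ z ∈ M ∧ p₀ ∈ M ∧ M.Nontrivial ∧ 0 < Metric.diam M := by
    by_cases hz : z = p₀
    · exact ⟨E', hE', hz ▸ hpE', hpE', hE'nt, hE'pos⟩
    · obtain ⟨M, hM, hzM, hpM, _⟩ := hbt z p₀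
      exact ⟨M, hM, hzM, hpM, ⟨z, hzM, p₀, hpM, hz⟩,
        lt_of_lt_of_le (dist_pos.2 hz) (Metric.dist_le_diam_of_mem (hbd M) hzM hpM)⟩
  set D := Metric.diam (univ : Set X) with hD
  have hD0 : 0 ≤ D := Metric.diam_nonneg
  have hsub : ∀ S : Set X, Metric.diam S ≤ D := fun S =>
    Metric.diam_mono (subset_univ S) (hbd _)
  set A := η (Metric.diam E' / Metric.diam M) with hA
  have hApos : 0 < A := qsc_pos hη (div_pos hE'pos hMpos)
  set B := η (D / ε) with hB
  have hBpos : 0 < B := qsc_pos hη (div_pos (lt_of_lt_of_le hE'pos (hsub E')) hε)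
  refine ⟨Metric.diam (f '' E') / (A * B), div_pos hfE'pos (mul_pos hApos hBpos), fun a ha => ?_⟩
  refine le_csInf (pullback_set_nonempty hbt f a z) ?_
  rintro t ⟨K, hK, haK, hzK, rfl⟩
  have hane : a ≠ z := by
    intro h
    rw [h, dist_self] at ha
    linarith
  have hKnt : K.Nontrivial := ⟨a, haK, z, hzK, hane⟩
  have hKε : ε ≤ Metric.diam K := le_trans ha (Metric.dist_le_diam_of_mem (hbd K) haK hzK)
  have h1 : Metric.diam (f '' M) ≤ η (Metric.diam M / Metric.diam K) * Metric.diam (f '' K) :=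
    hqs M K hM hK hMnt hKnt ⟨z, hzM, hzK⟩
  have h2 : Metric.diam (f '' E') ≤ A * Metric.diam (f '' M) :=
    hqs E' M hE' hM hE'nt hMnt ⟨p₀, hpE', hpM⟩
  have hratio : Metric.diam M / Metric.diam K ≤ D / ε :=
    div_le_div₀ hD0 (hsub M) hε hKε
  have h3 : η (Metric.diam M / Metric.diam K) ≤ B :=
    hη.2.1.monotoneOn (div_nonneg Metric.diam_nonneg Metric.diam_nonneg)
      (le_of_lt (div_pos (lt_of_lt_of_le hE'pos (hsub E')) hε)) hratio
  have h1' : Metric.diam (f '' M) ≤ B * Metric.diam (f '' K) :=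
    le_trans h1 (mul_le_mul_of_nonneg_right h3 Metric.diam_nonneg)
  have hchain : Metric.diam (f '' E') ≤ A * (B * Metric.diam (f '' K)) :=
    le_trans h2 (mul_le_mul_of_nonneg_left h1' (le_of_lt hApos))
  rw [div_le_iff₀ (mul_pos hApos hBpos)]
  nlinarith [Metric.diam_nonneg (s := f '' K)]


/-- For a non-constant branched quasisymmetry `f` on a compact bounded turning space, the
pullback distance `d_f` is a metric on `X` which is topologically equivalent to the original
metric (the identity map is a homeomorphism between the two). -/
theorem pullbackDist_is_metric_and_equivalent {X Y : Type*} [MetricSpace X] [CompactSpace X]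
    [MetricSpace Y] (C : ℝ) (hC : 1 ≤ C) (hbt : BoundedTurningWith X C)
    (η : ℝ → ℝ) (f : X → Y) (hf : BranchedQS η f) (hnc : ∃ p q : X, f p ≠ f q) :
    (∀ x : X, pullbackDist f x x = 0) ∧
      (∀ x y : X, pullbackDist f x y = pullbackDist f y x) ∧
      (∀ x y z : X, pullbackDist f x z ≤ pullbackDist f x y + pullbackDist f y z) ∧
      (∀ x y : X, pullbackDist f x y = 0 → x = y) ∧
      ∀ (u : ℕ → X) (p : X),
        Filter.Tendsto u Filter.atTop (nhds p) ↔
          Filter.Tendsto (fun m => pullbackDist f (u m) p) Filter.atTop (nhds 0) := by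
  have hC0 : 0 < C := lt_of_lt_of_le one_pos hC
  refine ⟨?_, ?_, ?_, ?_, ?_⟩
  · -- reflexivity
    intro x
    refine le_antisymm ?_ (pullbackDist_nonneg hbt f x x)
    have := pullbackDist_le f (K := {x}) ⟨isCompact_singleton, isConnected_singleton⟩
      rfl rfl (x := x) (y := x)
    simpa using this
  · -- symmetry
    intro x y
    unfold pullbackDist
    congr 1
    ext t
    constructor
    · rintro ⟨K, hK, hx, hy, rfl⟩; exact ⟨K, hK, hy, hx, rfl⟩
    · rintro ⟨K, hK, hx, hy, rfl⟩; exact ⟨K, hK, hy, hx, rfl⟩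
  · -- triangle
    intro x y z
    have key : ∀ t1 ∈ {t : ℝ | ∃ K : Set X, IsContinuum K ∧ x ∈ K ∧ y ∈ K ∧ t = Metric.diam (f '' K)},
        ∀ t2 ∈ {t : ℝ | ∃ K : Set X, IsContinuum K ∧ y ∈ K ∧ z ∈ K ∧ t = Metric.diam (f '' K)},
        pullbackDist f x z ≤ t1 + t2 := by
      rintro t1 ⟨K1, hK1, hx1, hy1, rfl⟩ t2 ⟨K2, hK2, hy2, hz2, rfl⟩
      have hKu : IsContinuum (K1 ∪ K2) :=
        ⟨hK1.1.union hK2.1, hK1.2.union ⟨y, hy1, hy2⟩ hK2.2⟩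
      have hle := pullbackDist_le f hKu (Or.inl hx1) (Or.inr hz2)
      refine le_trans hle ?_
      rw [image_union]
      exact Metric.diam_union' ⟨f y, ⟨y, hy1, rfl⟩, ⟨y, hy2, rfl⟩⟩
    have h1 : ∀ t2 ∈ {t : ℝ | ∃ K : Set X, IsContinuum K ∧ y ∈ K ∧ z ∈ K ∧ t = Metric.diam (f '' K)},
        pullbackDist f x z - t2 ≤ pullbackDist f x y := by
      intro t2 ht2
      refine le_csInf (pullback_set_nonempty hbt f x y) (fun t1 ht1 => ?_)
      linarith [key t1 ht1 t2 ht2]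
    have h2 : pullbackDist f x z - pullbackDist f x y ≤ pullbackDist f y z := by
      refine le_csInf (pullback_set_nonempty hbt f y z) (fun t2 ht2 => ?_)
      linarith [h1 t2 ht2]
    linarith
  · -- separation
    intro x y hxy
    by_contra hne
    have hd : 0 < dist x y := dist_pos.2 hne
    obtain ⟨c, hc, hlow⟩ := key_lower hbt hf hnc y hd
    have := hlow x (le_refl _)
    rw [hxy] at this
    linarith
  · -- topological equivalence
    intro u p
    constructor
    · intro hu
      rw [Metric.tendsto_atTop]
      intro ε hε
      have huc : UniformContinuous f := CompactSpace.uniformContinuous_of_continuous hf.1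
      obtain ⟨δ, hδ, hδ'⟩ := Metric.uniformContinuous_iff.1 huc (ε / 2) (by linarith)
      obtain ⟨N, hN⟩ := (Metric.tendsto_atTop.1 hu) (δ / C) (div_pos hδ hC0)
      refine ⟨N, fun m hm => ?_⟩
      obtain ⟨K, hK, huK, hpK, hKd⟩ := hbt (u m) p
      have hKδ : Metric.diam K < δ := by
        have := hN m hm
        calc Metric.diam K ≤ C * dist (u m) p := hKd
          _ < C * (δ / C) := by
              exact mul_lt_mul_of_pos_left this hC0
          _ = δ := by field_simp
      have himg : Metric.diam (f '' K) ≤ ε / 2 := by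
        refine Metric.diam_le_of_forall_dist_le (by linarith) ?_
        rintro _ ⟨a, haK, rfl⟩ _ ⟨b, hbK, rfl⟩
        have : dist a b < δ :=
          lt_of_le_of_lt (Metric.dist_le_diam_of_mem Metric.isBounded_of_compactSpace haK hbK) hKδ
        exact le_of_lt (hδ' this)
      have hle : pullbackDist f (u m) p ≤ ε / 2 := le_trans (pullbackDist_le f hK huK hpK) himg
      have hge : 0 ≤ pullbackDist f (u m) p := pullbackDist_nonneg hbt f (u m) p
      rw [Real.dist_eq, sub_zero, abs_of_nonneg hge]
      linarith
    · intro hu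
      rw [Metric.tendsto_atTop]
      intro ε hε
      obtain ⟨c, hc, hlow⟩ := key_lower hbt hf hnc p hε
      obtain ⟨N, hN⟩ := (Metric.tendsto_atTop.1 hu) c hc
      refine ⟨N, fun m hm => ?_⟩
      by_contra h
      push_neg at h
      have h1 := hlow (u m) h
      have h2 := hN m hm
      rw [Real.dist_eq, sub_zero] at h2
      have := le_abs_self (pullbackDist f (u m) p)
      linarith
end

section
/- Let X be a compact, bounded turning metric space, Y a metric space, f : X → Y a non-constant branched quasisymmetry, and d_f the pullback metric on X. Then: (i) f : (X,d_f) → Y is 1-Lipschitz; (ii) diam(f(J)) = diam_f(J) for every continuum J in (X,d_f), where diam_f denotes diameter with respect to d_f; and (iii) the metric space (X,d_f) is 1-bounded turning. -/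
open Metric Set Topology
open scoped ENNReal NNReal

/-- Diameter of a set with respect to the pullback distance. -/
noncomputable def pullbackDiam {X Y : Type*} [TopologicalSpace X] [PseudoMetricSpace Y]
    (f : X → Y) (S : Set X) : ℝ :=
  sSup {t : ℝ | ∃ p ∈ S, ∃ q ∈ S, t = pullbackDist f p q}

section Aux

variable {X Y : Type*} [MetricSpace X] [MetricSpace Y] {f : X → Y} {C : ℝ}

private lemma pd_bddBelow (f : X → Y) (x y : X) :
    BddBelow {t : ℝ | ∃ K : Set X, IsContinuum K ∧ x ∈ K ∧ y ∈ K ∧ t = Metric.diam (f '' K)} :=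
  ⟨0, by rintro t ⟨K, -, -, -, rfl⟩; exact Metric.diam_nonneg⟩

private lemma pd_le {K : Set X} (hK : IsContinuum K) {x y : X} (hx : x ∈ K) (hy : y ∈ K) :
    pullbackDist f x y ≤ Metric.diam (f '' K) :=
  csInf_le (pd_bddBelow f x y) ⟨K, hK, hx, hy, rfl⟩

private lemma dist_le_pd (hfc : Continuous f) (hbt : BoundedTurningWith X C)
    (x y : X) : dist (f x) (f y) ≤ pullbackDist f x y := by
  obtain ⟨K0, hK0, hx0, hy0, -⟩ := hbt x y
  refine le_csInf ⟨_, K0, hK0, hx0, hy0, rfl⟩ ?_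
  rintro t ⟨K, hK, hx, hy, rfl⟩
  exact Metric.dist_le_diam_of_mem (hK.1.image hfc).isBounded ⟨x, hx, rfl⟩ ⟨y, hy, rfl⟩

private lemma pdiam_le {K : Set X} (hK : IsContinuum K) :
    pullbackDiam f K ≤ Metric.diam (f '' K) := by
  obtain ⟨x0, hx0⟩ := hK.2.nonempty
  refine csSup_le ⟨_, x0, hx0, x0, hx0, rfl⟩ ?_
  rintro t ⟨p, hp, q, hq, rfl⟩
  exact pd_le hK hp hq

private lemma diam_le_pdiam (hfc : Continuous f) (hbt : BoundedTurningWith X C)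
    {K : Set X} (hK : IsContinuum K) :
    Metric.diam (f '' K) ≤ pullbackDiam f K := by
  obtain ⟨x0, hx0⟩ := hK.2.nonempty
  have hbdd : BddAbove {t : ℝ | ∃ p ∈ K, ∃ q ∈ K, t = pullbackDist f p q} :=
    ⟨Metric.diam (f '' K), by rintro t ⟨p, hp, q, hq, rfl⟩; exact pd_le hK hp hq⟩
  have h0 : (0 : ℝ) ≤ pullbackDiam f K := by
    have h1 : (0 : ℝ) ≤ pullbackDist f x0 x0 := by
      simpa using dist_le_pd hfc hbt x0 x0
    exact h1.trans (le_csSup hbdd ⟨x0, hx0, x0, hx0, rfl⟩)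
  refine Metric.diam_le_of_forall_dist_le h0 ?_
  rintro _ ⟨p, hp, rfl⟩ _ ⟨q, hq, rfl⟩
  exact (dist_le_pd hfc hbt p q).trans (le_csSup hbdd ⟨p, hp, q, hq, rfl⟩)

private lemma exists_min [CompactSpace X] (hfc : Continuous f)
    (hbt : BoundedTurningWith X C) (x y : X) :
    ∃ K : Set X, IsContinuum K ∧ x ∈ K ∧ y ∈ K ∧
      Metric.diam (f '' K) ≤ pullbackDist f x y := by
  classical
  set m := pullbackDist f x y with hm
  obtain ⟨K0, hK0, hx0, hy0, -⟩ := hbt x y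
  have hne : {t : ℝ | ∃ K : Set X, IsContinuum K ∧ x ∈ K ∧ y ∈ K ∧
      t = Metric.diam (f '' K)}.Nonempty := ⟨_, K0, hK0, hx0, hy0, rfl⟩
  have hsel : ∀ n : ℕ, ∃ K : Set X, IsContinuum K ∧ x ∈ K ∧ y ∈ K ∧
      Metric.diam (f '' K) < m + 1 / (n + 1) := by
    intro n
    have hlt : m < m + 1 / (n + 1) := by
      have : (0 : ℝ) < 1 / (n + 1) := by positivity
      linarith
    obtain ⟨t, ⟨K, hK, hx, hy, rfl⟩, ht⟩ := exists_lt_of_csInf_lt hne hlt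
    exact ⟨K, hK, hx, hy, ht⟩
  choose Ks hKs hxKs hyKs hdKs using hsel
  let u : ℕ → TopologicalSpace.NonemptyCompacts X :=
    fun n => ⟨⟨Ks n, (hKs n).1⟩, (hKs n).2.nonempty⟩
  obtain ⟨L, -, φ, hφ, hL⟩ := isCompact_univ.tendsto_subseq (fun n => Set.mem_univ (u n))
  have hfin : ∀ s t : Set X, s.Nonempty → t.Nonempty → EMetric.hausdorffEdist s t ≠ ⊤ :=
    fun s t hs ht => Metric.hausdorffEdist_ne_top_of_nonempty_of_bounded hs ht
      (isCompact_univ.isBounded.subset (Set.subset_univ s))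
      (isCompact_univ.isBounded.subset (Set.subset_univ t))
  have hd0 : Filter.Tendsto (fun j => Metric.hausdorffDist (Ks (φ j)) (L : Set X))
      Filter.atTop (𝓝 0) := by
    have := tendsto_iff_dist_tendsto_zero.1 hL
    simp only [Metric.NonemptyCompacts.dist_eq] at this
    exact this
  -- membership of x, y in the limit
  have hmem : ∀ z : X, (∀ n, z ∈ Ks n) → z ∈ (L : Set X) := by
    intro z hz
    have hle : ∀ j, Metric.infDist z (L : Set X) ≤
        Metric.hausdorffDist (Ks (φ j)) (L : Set X) := fun j =>
      Metric.infDist_le_hausdorffDist_of_mem (hz (φ j))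
        (hfin _ _ (hKs (φ j)).2.nonempty L.nonempty)
    have h0 : Metric.infDist z (L : Set X) ≤ 0 :=
      ge_of_tendsto hd0 (Filter.Eventually.of_forall hle)
    have : Metric.infDist z (L : Set X) = 0 := le_antisymm h0 Metric.infDist_nonneg
    exact (L.isCompact.isClosed.mem_iff_infDist_zero L.nonempty).2 this
  -- connectedness of the limit
  have hconn : IsPreconnected (L : Set X) := by
    intro U V hU hV hcov hsU hsV
    by_contra hempty
    rw [Set.not_nonempty_iff_eq_empty] at hempty
    have hAeq : (L : Set X) ∩ U = (L : Set X) \ V := by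
      ext z
      constructor
      · rintro ⟨hzL, hzU⟩
        refine ⟨hzL, fun hzV => ?_⟩
        have : z ∈ (L : Set X) ∩ (U ∩ V) := ⟨hzL, hzU, hzV⟩
        simp [hempty] at this
      · rintro ⟨hzL, hzV⟩
        rcases hcov hzL with h | h
        · exact ⟨hzL, h⟩
        · exact absurd h hzV
    have hBeq : (L : Set X) ∩ V = (L : Set X) \ U := by
      ext z
      constructor
      · rintro ⟨hzL, hzV⟩
        refine ⟨hzL, fun hzU => ?_⟩
        have : z ∈ (L : Set X) ∩ (U ∩ V) := ⟨hzL, hzU, hzV⟩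
        simp [hempty] at this
      · rintro ⟨hzL, hzU⟩
        rcases hcov hzL with h | h
        · exact absurd h hzU
        · exact ⟨hzL, h⟩
    have hAc : IsCompact ((L : Set X) ∩ U) := by
      rw [hAeq]
      exact L.isCompact.inter_right hV.isClosed_compl
    have hBc : IsCompact ((L : Set X) ∩ V) := by
      rw [hBeq]
      exact L.isCompact.inter_right hU.isClosed_compl
    have hdisjAB : Disjoint ((L : Set X) ∩ U) ((L : Set X) ∩ V) := by
      rw [Set.disjoint_left]
      rintro z ⟨hzL, hzU⟩ ⟨-, hzV⟩
      have : z ∈ (L : Set X) ∩ (U ∩ V) := ⟨hzL, hzU, hzV⟩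
      simp [hempty] at this
    obtain ⟨δ, hδ, hdisj⟩ := hdisjAB.exists_thickenings hAc hBc.isClosed
    obtain ⟨j, hj⟩ := (hd0.eventually_lt_const hδ).exists
    have hLAB : (L : Set X) = (L : Set X) ∩ U ∪ (L : Set X) ∩ V := by
      apply Set.eq_of_subset_of_subset
      · intro z hz
        rcases hcov hz with h | h
        · exact Or.inl ⟨hz, h⟩
        · exact Or.inr ⟨hz, h⟩
      · exact Set.union_subset Set.inter_subset_left Set.inter_subset_left
    -- the approximating continuum is covered by the two disjoint thickenings
    have hsub : Ks (φ j) ⊆ Metric.thickening δ ((L : Set X) ∩ U) ∪ Metric.thickening δ ((L : Set X) ∩ V) := by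
      intro z hz
      have h1 : Metric.infDist z (L : Set X) < δ :=
        lt_of_le_of_lt (Metric.infDist_le_hausdorffDist_of_mem hz
          (hfin _ _ (hKs (φ j)).2.nonempty L.nonempty)) hj
      obtain ⟨w, hw, hwd⟩ := (Metric.infDist_lt_iff L.nonempty).1 h1
      rw [hLAB] at hw
      rcases hw with hw | hw
      · exact Or.inl (Metric.mem_thickening_iff.2 ⟨w, hw, hwd⟩)
      · exact Or.inr (Metric.mem_thickening_iff.2 ⟨w, hw, hwd⟩)
    -- the approximating continuum meets each thickening
    have hmeet : ∀ S : Set X, S.Nonempty → S ⊆ (L : Set X) →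
        (Ks (φ j) ∩ Metric.thickening δ S).Nonempty := by
      rintro S ⟨a, ha⟩ hSL
      have h1 : Metric.infDist a (Ks (φ j)) < δ := by
        have := Metric.infDist_le_hausdorffDist_of_mem (hSL ha)
          (hfin _ _ L.nonempty (hKs (φ j)).2.nonempty)
        rw [Metric.hausdorffDist_comm] at this
        exact lt_of_le_of_lt this hj
      obtain ⟨w, hw, hwd⟩ := (Metric.infDist_lt_iff (hKs (φ j)).2.nonempty).1 h1
      exact ⟨w, hw, Metric.mem_thickening_iff.2 ⟨a, ha, by rwa [dist_comm]⟩⟩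
    obtain ⟨z, hz1, hz2, hz3⟩ := (hKs (φ j)).2.isPreconnected _ _
      Metric.isOpen_thickening Metric.isOpen_thickening hsub
      (hmeet _ hsU Set.inter_subset_left) (hmeet _ hsV Set.inter_subset_left)
    exact Set.disjoint_left.1 hdisj hz2 hz3
  -- the diameter bound for the limit
  have hm0 : (0 : ℝ) ≤ m := dist_nonneg.trans (dist_le_pd hfc hbt x y)
  have hdiam : Metric.diam (f '' (L : Set X)) ≤ m := by
    refine Metric.diam_le_of_forall_dist_le hm0 ?_
    rintro _ ⟨p, hp, rfl⟩ _ ⟨q, hq, rfl⟩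
    refine le_of_forall_pos_le_add ?_
    intro ε hε
    obtain ⟨δp, hδp, hp'⟩ := Metric.continuous_iff.1 hfc p (ε / 4) (by positivity)
    obtain ⟨δq, hδq, hq'⟩ := Metric.continuous_iff.1 hfc q (ε / 4) (by positivity)
    have hsmall : Filter.Tendsto (fun j => (1 : ℝ) / (φ j + 1)) Filter.atTop (𝓝 0) := by
      have h1 : Filter.Tendsto (fun n : ℕ => (1 : ℝ) / (n + 1)) Filter.atTop (𝓝 0) :=
        tendsto_one_div_add_atTop_nhds_zero_nat
      exact h1.comp hφ.tendsto_atTop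
    have hev : ∀ᶠ j in Filter.atTop,
        Metric.hausdorffDist (Ks (φ j)) (L : Set X) < min δp δq ∧
          (1 : ℝ) / (φ j + 1) < ε / 2 :=
      (hd0.eventually_lt_const (lt_min hδp hδq)).and
        (hsmall.eventually_lt_const (by positivity))
    obtain ⟨j, hj1, hj2⟩ := hev.exists
    have hfind : ∀ z : X, z ∈ (L : Set X) → (δz : ℝ) → 0 < δz →
        Metric.hausdorffDist (Ks (φ j)) (L : Set X) < δz →
        ∃ w ∈ Ks (φ j), dist z w < δz := by
      intro z hz δz hδz hlt
      have h1 : Metric.infDist z (Ks (φ j)) < δz := by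
        have := Metric.infDist_le_hausdorffDist_of_mem hz
          (hfin _ _ L.nonempty (hKs (φ j)).2.nonempty)
        rw [Metric.hausdorffDist_comm] at this
        exact lt_of_le_of_lt this hlt
      exact (Metric.infDist_lt_iff (hKs (φ j)).2.nonempty).1 h1
    obtain ⟨p', hp'mem, hp'd⟩ := hfind p hp δp hδp (lt_of_lt_of_le hj1 (min_le_left _ _))
    obtain ⟨q', hq'mem, hq'd⟩ := hfind q hq δq hδq (lt_of_lt_of_le hj1 (min_le_right _ _))
    have h1 : dist (f p) (f p') < ε / 4 := by
      have := hp' p' (by rwa [dist_comm])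
      rwa [dist_comm]
    have h2 : dist (f q') (f q) < ε / 4 := hq' q' (by rwa [dist_comm])
    have h3 : dist (f p') (f q') ≤ Metric.diam (f '' Ks (φ j)) :=
      Metric.dist_le_diam_of_mem ((hKs (φ j)).1.image hfc).isBounded
        ⟨p', hp'mem, rfl⟩ ⟨q', hq'mem, rfl⟩
    have h4 : Metric.diam (f '' Ks (φ j)) < m + ε / 2 :=
      lt_of_lt_of_le (hdKs (φ j)) (by linarith)
    calc dist (f p) (f q) ≤ dist (f p) (f p') + dist (f p') (f q') + dist (f q') (f q) :=
          dist_triangle4 _ _ _ _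
      _ ≤ ε / 4 + (m + ε / 2) + ε / 4 := by linarith
      _ = m + ε := by ring
  exact ⟨(L : Set X), ⟨L.isCompact, L.nonempty, hconn⟩,
    hmem x fun n => hxKs n, hmem y fun n => hyKs n, hdiam⟩

end Aux

/-- For a non-constant branched quasisymmetry `f` on a compact bounded turning space:
(i) `f : (X, d_f) → Y` is `1`-Lipschitz; (ii) `f` preserves the `d_f`-diameter of continua;
(iii) `(X, d_f)` is bounded turning with constant `1`. -/
theorem pullbackDist_factorization {X Y : Type*} [MetricSpace X] [CompactSpace X]
    [MetricSpace Y] (C : ℝ) (hC : 1 ≤ C) (hbt : BoundedTurningWith X C)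
    (η : ℝ → ℝ) (f : X → Y) (hf : BranchedQS η f) (hnc : ∃ p q : X, f p ≠ f q) :
    (∀ x y : X, dist (f x) (f y) ≤ pullbackDist f x y) ∧
      (∀ J : Set X, IsContinuum J → Metric.diam (f '' J) = pullbackDiam f J) ∧
      ∀ x y : X, ∃ K : Set X, IsContinuum K ∧ x ∈ K ∧ y ∈ K ∧
        pullbackDiam f K ≤ 1 * pullbackDist f x y := by
  obtain ⟨hfc, -⟩ := hf
  refine ⟨dist_le_pd hfc hbt, fun J hJ =>
    le_antisymm (diam_le_pdiam hfc hbt hJ) (pdiam_le hJ), fun x y => ?_⟩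
  obtain ⟨K, hK, hx, hy, hle⟩ := exists_min hfc hbt x y
  exact ⟨K, hK, hx, hy, by rw [one_mul]; exact (pdiam_le hK).trans hle⟩
end

section
/- Let X be a compact, C-bounded turning metric space with metric d, Y a metric space, f : X → Y a non-constant branched quasisymmetry with control homeomorphism η, and d_f the pullback metric on X. Then the identity map from (X,d) to (X,d_f) is an η̃-quasisymmetric homeomorphism, where η̃(t) = η(C·t). -/
open Metric Set
open scoped ENNReal NNReal

/-- For a non-constant branched quasisymmetry `f` with control `η` on a compact
`C`-bounded turning space, the identity map from `(X, d)` to `(X, d_f)` is an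
`η̃`-quasisymmetric homeomorphism, where `η̃(t) = η(C t)`. -/
theorem pullbackDist_id_quasisymmetric {X Y : Type*} [MetricSpace X] [CompactSpace X]
    [MetricSpace Y] (C : ℝ) (hC : 1 ≤ C) (hbt : BoundedTurningWith X C)
    (η : ℝ → ℝ) (f : X → Y) (hf : BranchedQS η f) (hnc : ∃ p q : X, f p ≠ f q) :
    (∀ x a b₁ : X, x ≠ a → x ≠ b₁ → a ≠ b₁ →
        pullbackDist f x a ≤ η (C * (dist x a / dist x b₁)) * pullbackDist f x b₁) ∧
      ∀ (u : ℕ → X) (p : X),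
        Filter.Tendsto u Filter.atTop (nhds p) ↔
          Filter.Tendsto (fun m => pullbackDist f (u m) p) Filter.atTop (nhds 0) := by
  classical
  obtain ⟨hfc, ⟨hηc, hηm, hηmaps, hηsurj⟩, hQS⟩ := hf
  have hηmono : MonotoneOn η (Set.Ici 0) := hηm.monotoneOn
  have hη0 : η 0 = 0 := by
    obtain ⟨s, hs, hηs⟩ := hηsurj (Set.mem_Ici.mpr le_rfl)
    rcases eq_or_lt_of_le (mem_Ici.mp hs) with h | h
    · rwa [← h] at hηs
    · have h1 : η 0 < η s := hηm (self_mem_Ici) hs h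
      have h2 : (0:ℝ) ≤ η 0 := hηmaps (self_mem_Ici)
      linarith
  have hηpos : ∀ t : ℝ, 0 < t → 0 < η t := by
    intro t ht
    have := hηm (self_mem_Ici) (mem_Ici.mpr ht.le) ht
    linarith [hη0 ▸ this]
  -- basic facts about the defining set of pullbackDist
  have hbdd : ∀ x y : X, BddBelow {t : ℝ | ∃ K : Set X, IsContinuum K ∧ x ∈ K ∧ y ∈ K ∧
      t = Metric.diam (f '' K)} := by
    intro x y
    refine ⟨0, ?_⟩
    rintro t ⟨K, _, _, _, rfl⟩
    exact Metric.diam_nonneg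
  have hne : ∀ x y : X, {t : ℝ | ∃ K : Set X, IsContinuum K ∧ x ∈ K ∧ y ∈ K ∧
      t = Metric.diam (f '' K)}.Nonempty := by
    intro x y
    obtain ⟨K, hK, hx, hy, _⟩ := hbt x y
    exact ⟨_, K, hK, hx, hy, rfl⟩
  have hpd0 : ∀ x y : X, 0 ≤ pullbackDist f x y := by
    intro x y
    apply Real.sInf_nonneg
    rintro t ⟨K, _, _, _, rfl⟩
    exact Metric.diam_nonneg
  -- Part 1
  have part1 : ∀ x a b₁ : X, x ≠ a → x ≠ b₁ → a ≠ b₁ →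
      pullbackDist f x a ≤ η (C * (dist x a / dist x b₁)) * pullbackDist f x b₁ := by
    intro x a b hxa hxb _
    obtain ⟨K, hK, hxK, haK, hKd⟩ := hbt x a
    have hdxa : 0 < dist x a := dist_pos.mpr hxa
    have hdxb : 0 < dist x b := dist_pos.mpr hxb
    set T : ℝ := C * (dist x a / dist x b) with hT
    have hTpos : 0 < T := by
      have : 0 < C := lt_of_lt_of_le one_pos hC
      positivity
    have hηT : 0 < η T := hηpos T hTpos
    have key : ∀ t ∈ {t : ℝ | ∃ K' : Set X, IsContinuum K' ∧ x ∈ K' ∧ b ∈ K' ∧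
        t = Metric.diam (f '' K')}, pullbackDist f x a ≤ η T * t := by
      rintro t ⟨K', hK', hxK', hbK', rfl⟩
      have hK'd : dist x b ≤ Metric.diam K' :=
        Metric.dist_le_diam_of_mem hK'.1.isBounded hxK' hbK'
      have hKnt : K.Nontrivial := ⟨x, hxK, a, haK, hxa⟩
      have hK'nt : K'.Nontrivial := ⟨x, hxK', b, hbK', hxb⟩
      have h1 := hQS K K' hK hK' hKnt hK'nt ⟨x, hxK, hxK'⟩
      have hratio : Metric.diam K / Metric.diam K' ≤ T := by
        have h2 : Metric.diam K / Metric.diam K' ≤ (C * dist x a) / dist x b :=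
          div_le_div₀ (by positivity) hKd hdxb hK'd
        rw [hT, mul_div_assoc] at *
        linarith
      have h2 : η (Metric.diam K / Metric.diam K') ≤ η T :=
        hηmono (mem_Ici.mpr (div_nonneg Metric.diam_nonneg Metric.diam_nonneg))
          (mem_Ici.mpr hTpos.le) hratio
      calc pullbackDist f x a ≤ Metric.diam (f '' K) :=
            csInf_le (hbdd x a) ⟨K, hK, hxK, haK, rfl⟩
        _ ≤ η (Metric.diam K / Metric.diam K') * Metric.diam (f '' K') := h1
        _ ≤ η T * Metric.diam (f '' K') :=
            mul_le_mul_of_nonneg_right h2 Metric.diam_nonneg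
    have hfin : pullbackDist f x a / η T ≤ pullbackDist f x b := by
      apply le_csInf (hne x b)
      intro t ht
      rw [div_le_iff₀ hηT]
      have := key t ht
      linarith [mul_comm (η T) t]
    have := (div_le_iff₀ hηT).mp hfin
    linarith [mul_comm (pullbackDist f x b) (η T)]
  -- setup for part 2
  have hubd : Bornology.IsBounded (Set.univ : Set X) := isCompact_univ.isBounded
  set D := Metric.diam (Set.univ : Set X) with hDdef
  obtain ⟨p₀, q₀, hfpq⟩ := hnc
  have hpq : p₀ ≠ q₀ := fun h => hfpq (by rw [h])
  obtain ⟨E₀, hE₀, hp₀, hq₀, _⟩ := hbt p₀ q₀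
  set δ₀ := dist (f p₀) (f q₀) with hδdef
  have hδ₀ : 0 < δ₀ := dist_pos.mpr hfpq
  have hD : 0 < D :=
    lt_of_lt_of_le (dist_pos.mpr hpq)
      (Metric.dist_le_diam_of_mem hubd (mem_univ _) (mem_univ _))
  -- key uniform lower bound
  have key2 : ∀ ε : ℝ, 0 < ε → ∀ x y : X, ε ≤ dist x y →
      δ₀ / η (D / ε) ≤ pullbackDist f x y := by
    intro ε hε x y hxy
    have hηD : 0 < η (D / ε) := hηpos _ (div_pos hD hε)
    apply le_csInf (hne x y)
    rintro t ⟨K, hK, hxK, hyK, rfl⟩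
    obtain ⟨L, hL, hxL, hp₀L, _⟩ := hbt x p₀
    have hEcomp : IsCompact (E₀ ∪ L) := hE₀.1.union hL.1
    have hEconn : IsConnected (E₀ ∪ L) := IsConnected.union ⟨p₀, hp₀, hp₀L⟩ hE₀.2 hL.2
    have hEcont : IsContinuum (E₀ ∪ L) := ⟨hEcomp, hEconn⟩
    have hEnt : (E₀ ∪ L).Nontrivial := ⟨p₀, Or.inl hp₀, q₀, Or.inl hq₀, hpq⟩
    have hxy' : x ≠ y := by
      intro h; subst h; simp [dist_self] at hxy; linarith
    have hKnt : K.Nontrivial := ⟨x, hxK, y, hyK, hxy'⟩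
    have h1 := hQS (E₀ ∪ L) K hEcont hK hEnt hKnt ⟨x, Or.inr hxL, hxK⟩
    have hKd : ε ≤ Metric.diam K :=
      hxy.trans (Metric.dist_le_diam_of_mem hK.1.isBounded hxK hyK)
    have hEd : Metric.diam (E₀ ∪ L) ≤ D := Metric.diam_mono (subset_univ _) hubd
    have hratio : Metric.diam (E₀ ∪ L) / Metric.diam K ≤ D / ε :=
      div_le_div₀ hD.le hEd hε hKd
    have h2 : η (Metric.diam (E₀ ∪ L) / Metric.diam K) ≤ η (D / ε) :=
      hηmono (mem_Ici.mpr (div_nonneg Metric.diam_nonneg Metric.diam_nonneg))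
        (mem_Ici.mpr (div_pos hD hε).le) hratio
    have h3 : δ₀ ≤ Metric.diam (f '' (E₀ ∪ L)) := by
      have hb : Bornology.IsBounded (f '' (E₀ ∪ L)) := (hEcomp.image hfc).isBounded
      exact Metric.dist_le_diam_of_mem hb ⟨p₀, Or.inl hp₀, rfl⟩ ⟨q₀, Or.inl hq₀, rfl⟩
    have h4 : δ₀ ≤ η (D / ε) * Metric.diam (f '' K) := by
      calc δ₀ ≤ Metric.diam (f '' (E₀ ∪ L)) := h3
        _ ≤ η (Metric.diam (E₀ ∪ L) / Metric.diam K) * Metric.diam (f '' K) := h1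
        _ ≤ η (D / ε) * Metric.diam (f '' K) :=
            mul_le_mul_of_nonneg_right h2 Metric.diam_nonneg
    rw [div_le_iff₀ hηD]
    linarith [mul_comm (η (D / ε)) (Metric.diam (f '' K))]
  refine ⟨part1, ?_⟩
  intro u p
  constructor
  · -- forward: convergence in d implies convergence in d_f
    intro hu
    rw [Metric.tendsto_atTop]
    intro ε hε
    have huc := CompactSpace.uniformContinuous_of_continuous hfc
    rw [Metric.uniformContinuous_iff] at huc
    obtain ⟨δ, hδ, hδ'⟩ := huc (ε / 2) (by linarith)
    have hCpos : 0 < C := lt_of_lt_of_le one_pos hC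
    obtain ⟨N, hN⟩ := Metric.tendsto_atTop.mp hu (δ / C) (by positivity)
    refine ⟨N, fun n hn => ?_⟩
    obtain ⟨K, hK, hxK, hpK, hKd⟩ := hbt (u n) p
    have hdn : C * dist (u n) p < δ := by
      have := hN n hn
      calc C * dist (u n) p < C * (δ / C) := by
            exact mul_lt_mul_of_pos_left this hCpos
        _ = δ := by field_simp
    have hdiam : Metric.diam (f '' K) ≤ ε / 2 := by
      apply Metric.diam_le_of_forall_dist_le (by linarith)
      rintro _ ⟨a, haK, rfl⟩ _ ⟨b, hbK, rfl⟩
      have hab : dist a b < δ := by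
        have := Metric.dist_le_diam_of_mem hK.1.isBounded haK hbK
        linarith
      exact (hδ' hab).le
    have hle : pullbackDist f (u n) p ≤ ε / 2 :=
      le_trans (csInf_le (hbdd (u n) p) ⟨K, hK, hxK, hpK, rfl⟩) hdiam
    have h0 := hpd0 (u n) p
    rw [Real.dist_eq, sub_zero, abs_of_nonneg h0]
    linarith
  · -- reverse: convergence in d_f implies convergence in d
    intro hpd
    rw [Metric.tendsto_atTop]
    intro ε hε
    have hηD : 0 < η (D / ε) := hηpos _ (div_pos hD hε)
    have hc : 0 < δ₀ / η (D / ε) := div_pos hδ₀ hηD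
    obtain ⟨N, hN⟩ := Metric.tendsto_atTop.mp hpd _ hc
    refine ⟨N, fun n hn => ?_⟩
    by_contra h
    push_neg at h
    have hlow := key2 ε hε (u n) p h
    have h2 := hN n hn
    rw [Real.dist_eq, sub_zero] at h2
    have := le_abs_self (pullbackDist f (u n) p)
    linarith
end

section
/- Let X and Y be metric spaces and let f : X → Y be Lipschitz light with constant L. Then for every continuum K ⊆ X, L^{-1}·diam(K) ≤ diam(f(K)) ≤ L·diam(K). -/
open Metric Set
open scoped ENNReal NNReal

lemma SameRComponent.snoc {X : Type*} [PseudoMetricSpace X] {r : ℝ} {S : Set X} {x y z : X}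
    (h : SameRComponent r S x y) (hz : z ∈ S) (hd : dist y z ≤ r) :
    SameRComponent r S x z := by
  obtain ⟨l, ⟨hmem, hchain⟩, hhd, hlast⟩ := h
  have hne : l ≠ [] := by intro h; simp [h] at hhd
  refine ⟨l ++ [z], ⟨?_, ?_⟩, ?_, ?_⟩
  · intro w hw
    rcases List.mem_append.1 hw with h | h
    · exact hmem w h
    · simp at h; subst h; exact hz
  · refine List.isChain_append.2 ⟨hchain, List.isChain_singleton _, ?_⟩
    intro a ha b hb
    rw [hlast] at ha
    simp at ha hb; subst ha; subst hb; exact hd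
  · rw [List.head?_append_of_ne_nil _ hne]; exact hhd
  · simp [List.getLast?_concat]

lemma sameRComponent_of_preconnected {X : Type*} [PseudoMetricSpace X] {K : Set X}
    (hK : IsPreconnected K) {r : ℝ} (hr : 0 < r) {x : X} (hx : x ∈ K) :
    ∀ y ∈ K, SameRComponent r K x y := by
  set S : Set X := {y | y ∈ K ∧ SameRComponent r K x y} with hS
  have hxS : x ∈ S := ⟨hx, ⟨[x], ⟨by simpa using hx, List.isChain_singleton _⟩, rfl, rfl⟩⟩
  set u : Set X := ⋃ y ∈ S, ball y r with hu
  set v : Set X := ⋃ y ∈ K \ S, ball y r with hv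
  have hou : IsOpen u := isOpen_biUnion fun _ _ => isOpen_ball
  have hov : IsOpen v := isOpen_biUnion fun _ _ => isOpen_ball
  have hsub : K ⊆ u ∪ v := by
    intro y hy
    by_cases h : y ∈ S
    · exact Or.inl (mem_biUnion h (mem_ball_self hr))
    · exact Or.inr (mem_biUnion ⟨hy, h⟩ (mem_ball_self hr))
  have hdisj : (K ∩ (u ∩ v)) = ∅ := by
    rw [eq_empty_iff_forall_notMem]
    rintro w ⟨hwK, hwu, hwv⟩
    obtain ⟨s, hsS, hws⟩ := mem_iUnion₂.1 hwu
    obtain ⟨t, htKS, hwt⟩ := mem_iUnion₂.1 hwv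
    apply htKS.2
    refine ⟨htKS.1, (hsS.2.snoc hwK (by rw [dist_comm]; exact hws.le)).snoc htKS.1 ?_⟩
    exact hwt.le
  by_cases hvK : (K ∩ v).Nonempty
  · exfalso
    obtain ⟨w, hw⟩ := hK u v hou hov hsub ⟨x, hx, mem_biUnion hxS (mem_ball_self hr)⟩ hvK
    rw [eq_empty_iff_forall_notMem] at hdisj
    exact hdisj w ⟨hw.1, hw.2⟩
  · intro y hy
    by_contra h
    exact hvK ⟨y, hy, mem_biUnion (⟨hy, fun hc => h hc.2⟩ : y ∈ K \ S) (mem_ball_self hr)⟩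

/-- A Lipschitz light map with constant `L` roughly preserves the diameter of continua:
`L⁻¹ · diam K ≤ diam (f '' K) ≤ L · diam K`. -/
theorem lipschitzLight_diam_continuum {X Y : Type*} [MetricSpace X] [MetricSpace Y]
    (L : ℝ) (hL : 0 < L) (f : X → Y) (hf : LipschitzLightWith L f)
    (K : Set X) (hK : IsContinuum K) :
    L⁻¹ * Metric.diam K ≤ Metric.diam (f '' K) ∧
      Metric.diam (f '' K) ≤ L * Metric.diam K := by
  obtain ⟨hcomp, hconn⟩ := hK
  have hlip : LipschitzWith ⟨L, hL.le⟩ f :=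
    LipschitzWith.of_dist_le_mul fun x y => hf.1 x y
  have hub : Metric.diam (f '' K) ≤ L * Metric.diam K :=
    hlip.diam_image_le K hcomp.isBounded
  refine ⟨?_, hub⟩
  -- lower bound
  have himg : IsCompact (f '' K) := hcomp.image hlip.continuous
  have key : ∀ ε : ℝ, 0 < ε → Metric.diam K ≤ L * (Metric.diam (f '' K) + ε) := by
    intro ε hε
    set r : ℝ := Metric.diam (f '' K) + ε with hr
    have hrpos : 0 < r := by positivity
    have hW : EMetric.diam (f '' K) ≤ ENNReal.ofReal r := by
      change ediam (f '' K) ≤ _; rw [← ENNReal.ofReal_toReal himg.isBounded.ediam_ne_top]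
      exact ENNReal.ofReal_le_ofReal (le_add_of_nonneg_right hε.le)
    refine Metric.diam_le_of_forall_dist_le (by positivity) ?_
    intro x hx y hy
    have hpath := sameRComponent_of_preconnected hconn.isPreconnected hrpos hx y hy
    refine hf.2 r hrpos (f '' K) hW x y ?_
    obtain ⟨l, ⟨hmem, hchain⟩, h1, h2⟩ := hpath
    exact ⟨l, ⟨fun z hz => mem_image_of_mem f (hmem z hz), hchain⟩, h1, h2⟩
  have hle : Metric.diam K ≤ L * Metric.diam (f '' K) := by
    refine le_of_forall_pos_le_add fun ε hε => ?_
    have := key (ε / L) (by positivity)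
    calc Metric.diam K ≤ L * (Metric.diam (f '' K) + ε / L) := this
      _ = L * Metric.diam (f '' K) + ε := by field_simp
  exact (inv_mul_le_iff₀ hL).2 (by linarith)
end

section
/- Let X be a bounded turning metric space, Y a metric space, and f : X → Y a map. Then f is Lipschitz light if and only if there is a constant c ≥ 1 such that c^{-1}·diam(K) ≤ diam(f(K)) ≤ c·diam(K) for every continuum K ⊆ X. Moreover, the constant in each of the two conditions can be bounded in terms of the constant in the other and the bounded turning constant of X. -/
open Metric Set
open scoped ENNReal NNReal

/-! ### Auxiliary lemmas -/

lemma sameR_refl {X : Type*} [PseudoMetricSpace X] {r : ℝ} {S : Set X} {x : X} (hx : x ∈ S) :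
    SameRComponent r S x x :=
  ⟨[x], ⟨by simpa using hx, List.isChain_singleton _⟩, rfl, rfl⟩

lemma sameR_snoc {X : Type*} [PseudoMetricSpace X] {r : ℝ} {S : Set X} {x z w : X}
    (h : SameRComponent r S x z) (hw : w ∈ S) (hd : dist z w ≤ r) :
    SameRComponent r S x w := by
  obtain ⟨l, ⟨hmem, hch⟩, hh, hl⟩ := h
  have hne : l ≠ [] := by rintro rfl; simp at hh
  refine ⟨l ++ [w], ⟨?_, ?_⟩, ?_, ?_⟩
  · intro u hu
    rcases List.mem_append.1 hu with h | h
    · exact hmem _ h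
    · simp at h; subst h; exact hw
  · refine List.isChain_append.2 ?_
    refine ⟨hch, List.isChain_singleton _, ?_⟩
    intro a ha b hb
    simp only [List.head?_cons, Option.mem_def, Option.some.injEq] at hb
    rw [hl, Option.mem_def, Option.some.injEq] at ha
    subst ha; subst hb; exact hd
  · rw [List.head?_append_of_ne_nil _ hne, hh]
  · simpa using (List.getLast?_concat w l ▸ rfl : (l ++ [w]).getLast? = some w)

lemma sameR_mono {X : Type*} [PseudoMetricSpace X] {r : ℝ} {S T : Set X} (hST : S ⊆ T)
    {x y : X} (h : SameRComponent r S x y) : SameRComponent r T x y := by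
  obtain ⟨l, ⟨hmem, hch⟩, hh, hl⟩ := h
  exact ⟨l, ⟨fun z hz => hST (hmem z hz), hch⟩, hh, hl⟩

/-- A preconnected set is `r`-chain connected for every `r > 0`. -/
lemma IsPreconnected.sameRComponent {X : Type*} [PseudoMetricSpace X] {K : Set X}
    (hK : IsPreconnected K) {r : ℝ} (hr : 0 < r) {x y : X} (hx : x ∈ K) (hy : y ∈ K) :
    SameRComponent r K x y := by
  by_contra hxy
  set U : Set X := ⋃ a ∈ {a ∈ K | SameRComponent r K x a}, ball a r with hU
  set V : Set X := ⋃ a ∈ {a ∈ K | ¬ SameRComponent r K x a}, ball a r with hV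
  have hUo : IsOpen U := isOpen_biUnion fun _ _ => isOpen_ball
  have hVo : IsOpen V := isOpen_biUnion fun _ _ => isOpen_ball
  have hsub : K ⊆ U ∪ V := by
    intro z hz
    by_cases h : SameRComponent r K x z
    · exact Or.inl (mem_biUnion ⟨hz, h⟩ (mem_ball_self hr))
    · exact Or.inr (mem_biUnion ⟨hz, h⟩ (mem_ball_self hr))
  have hxU : x ∈ K ∩ U := ⟨hx, mem_biUnion ⟨hx, sameR_refl hx⟩ (mem_ball_self hr)⟩
  have hyV : y ∈ K ∩ V := ⟨hy, mem_biUnion ⟨hy, hxy⟩ (mem_ball_self hr)⟩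
  obtain ⟨z, hzK, hzU, hzV⟩ := hK U V hUo hVo hsub ⟨x, hxU⟩ ⟨y, hyV⟩
  obtain ⟨a, ⟨haK, haR⟩, haz⟩ := mem_iUnion₂.1 hzU
  obtain ⟨b, ⟨hbK, hbR⟩, hbz⟩ := mem_iUnion₂.1 hzV
  have h1 : SameRComponent r K x z := sameR_snoc haR hzK (le_of_lt (mem_ball'.1 haz))
  exact hbR (sameR_snoc h1 hbK (le_of_lt (mem_ball.1 hbz)))

section Part2
variable {X Y : Type*} [MetricSpace X] [MetricSpace Y] {c Cbt : ℝ} {f : X → Y}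

/-- Under the continuum-diameter condition, images of continua are bounded. -/
lemma image_isBounded
    (hf : ∀ K : Set X, IsContinuum K → c⁻¹ * Metric.diam K ≤ Metric.diam (f '' K) ∧
      Metric.diam (f '' K) ≤ c * Metric.diam K)
    (hc : 1 ≤ c) {K : Set X} (hK : IsContinuum K) : Bornology.IsBounded (f '' K) := by
  by_contra hb
  have h0 : Metric.diam (f '' K) = 0 := Metric.diam_eq_zero_of_unbounded hb
  have h1 := (hf K hK).1
  rw [h0] at h1
  have hcpos : (0:ℝ) < c := lt_of_lt_of_le one_pos hc
  have hdK : Metric.diam K ≤ 0 := by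
    have h2 : (0:ℝ) < c⁻¹ := inv_pos.2 hcpos
    nlinarith [Metric.diam_nonneg (s := K)]
  have hdK0 : Metric.diam K = 0 := le_antisymm hdK Metric.diam_nonneg
  have hsub : K.Subsingleton := by
    have hne : EMetric.diam K ≠ ⊤ := Metric.isBounded_iff_ediam_ne_top.1 hK.1.isBounded
    have : EMetric.diam K = 0 := by
      rw [Metric.diam] at hdK0
      exact (ENNReal.toReal_eq_zero_iff _).1 hdK0 |>.resolve_right hne
    exact EMetric.diam_eq_zero_iff.1 this
  have : (f '' K).Subsingleton := hsub.image f
  rcases this.eq_empty_or_singleton with h | ⟨a, h⟩ <;> rw [h] at hb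
  · exact hb Bornology.isBounded_empty
  · exact hb Bornology.isBounded_singleton

lemma dist_image_le_of_continuum
    (hf : ∀ K : Set X, IsContinuum K → c⁻¹ * Metric.diam K ≤ Metric.diam (f '' K) ∧
      Metric.diam (f '' K) ≤ c * Metric.diam K)
    (hc : 1 ≤ c) {K : Set X} (hK : IsContinuum K) {u v : X} (hu : u ∈ K) (hv : v ∈ K) :
    dist (f u) (f v) ≤ c * Metric.diam K :=
  le_trans (Metric.dist_le_diam_of_mem (image_isBounded hf hc hK)
    (mem_image_of_mem f hu) (mem_image_of_mem f hv)) (hf K hK).2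

/-- Along an `r`-path, one can build a continuum containing the endpoints whose
`f`-image stays close to the image of the path. -/
lemma path_continuum (hbt : BoundedTurningWith X Cbt)
    (hf : ∀ K : Set X, IsContinuum K → c⁻¹ * Metric.diam K ≤ Metric.diam (f '' K) ∧
      Metric.diam (f '' K) ≤ c * Metric.diam K)
    (hc : 1 ≤ c) (hCbt : 1 ≤ Cbt) {r : ℝ} (hr : 0 ≤ r) :
    ∀ l : List X, l.Chain' (fun a b => dist a b ≤ r) →
      ∀ x y : X, l.head? = some x → l.getLast? = some y →
      ∃ K : Set X, IsContinuum K ∧ x ∈ K ∧ y ∈ K ∧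
        ∀ w ∈ K, ∃ z ∈ l, dist (f w) (f z) ≤ c * (Cbt * r) := by
  have hc0 : (0:ℝ) < c := lt_of_lt_of_le one_pos hc
  have hCbt0 : (0:ℝ) < Cbt := lt_of_lt_of_le one_pos hCbt
  have hnn : 0 ≤ c * (Cbt * r) := by positivity
  intro l
  induction l with
  | nil => intro _ x y hh _; simp at hh
  | cons a t ih =>
    intro hch x y hh hl
    simp only [List.head?_cons, Option.some.injEq] at hh
    subst hh
    cases t with
    | nil =>
      simp only [List.getLast?_singleton, Option.some.injEq] at hl
      subst hl
      exact ⟨{a}, ⟨isCompact_singleton, isConnected_singleton⟩, rfl, rfl,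
        fun w hw => ⟨a, List.mem_singleton_self a,
          by rw [mem_singleton_iff.1 hw]; simpa using hnn⟩⟩
    | cons b t' =>
      have hab : dist a b ≤ r := (List.isChain_cons_cons.1 hch).1
      have hch' : (b :: t').Chain' (fun a b => dist a b ≤ r) := (List.isChain_cons_cons.1 hch).2
      have hl' : (b :: t').getLast? = some y := by
        rwa [List.getLast?_cons_cons] at hl
      obtain ⟨K', hK', hbK', hyK', hclose'⟩ := ih hch' b y rfl hl'
      obtain ⟨K0, hK0, hxK0, hbK0, hdK0⟩ := hbt a b
      refine ⟨K0 ∪ K', ⟨hK0.1.union hK'.1,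
        IsConnected.union ⟨b, hbK0, hbK'⟩ hK0.2 hK'.2⟩,
        Or.inl hxK0, Or.inr hyK', ?_⟩
      intro w hw
      rcases hw with hw | hw
      · refine ⟨a, List.mem_cons_self, ?_⟩
        calc dist (f w) (f a) ≤ c * Metric.diam K0 :=
              dist_image_le_of_continuum hf hc hK0 hw hxK0
          _ ≤ c * (Cbt * r) := by
              apply mul_le_mul_of_nonneg_left _ hc0.le
              calc Metric.diam K0 ≤ Cbt * dist a b := hdK0
                _ ≤ Cbt * r := mul_le_mul_of_nonneg_left hab hCbt0.le
      · obtain ⟨z, hz, hdz⟩ := hclose' w hw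
        exact ⟨z, List.mem_cons_of_mem _ hz, hdz⟩

end Part2

/-- On a bounded turning space, a map is Lipschitz light iff it roughly preserves the
diameters of continua; moreover the constant in each condition is bounded in terms of the
constant in the other and the bounded turning constant. -/
theorem lipschitzLight_iff_continuum_diam (Cbt : ℝ) (hCbt : 1 ≤ Cbt) :
    (∀ L : ℝ, 0 < L → ∃ c : ℝ, 1 ≤ c ∧
      ∀ (X Y : Type) [MetricSpace X] [MetricSpace Y], BoundedTurningWith X Cbt →
        ∀ f : X → Y, LipschitzLightWith L f → ∀ K : Set X, IsContinuum K →
          c⁻¹ * Metric.diam K ≤ Metric.diam (f '' K) ∧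
            Metric.diam (f '' K) ≤ c * Metric.diam K) ∧
    ∀ c : ℝ, 1 ≤ c → ∃ L : ℝ, 0 < L ∧
      ∀ (X Y : Type) [MetricSpace X] [MetricSpace Y], BoundedTurningWith X Cbt →
        ∀ f : X → Y,
          (∀ K : Set X, IsContinuum K →
            c⁻¹ * Metric.diam K ≤ Metric.diam (f '' K) ∧
              Metric.diam (f '' K) ≤ c * Metric.diam K) →
          LipschitzLightWith L f := by
  have hCbt0 : (0:ℝ) < Cbt := lt_of_lt_of_le one_pos hCbt
  constructor
  · -- Lipschitz light ⇒ continuum-diameter condition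
    intro L hL
    refine ⟨max L 1, le_max_right _ _, ?_⟩
    intro X Y _ _ hbt f hf K hK
    have hc : (0:ℝ) < max L 1 := lt_of_lt_of_le one_pos (le_max_right _ _)
    have hLip : LipschitzWith (Real.toNNReal L) f :=
      LipschitzWith.of_dist_le_mul fun x y => by
        simpa [Real.coe_toNNReal L hL.le] using hf.1 x y
    have himg : Bornology.IsBounded (f '' K) := (hK.1.image hLip.continuous).isBounded
    set s := Metric.diam (f '' K) with hs
    have hsnn : 0 ≤ s := Metric.diam_nonneg
    have key : ∀ x ∈ K, ∀ y ∈ K, dist x y ≤ L * s := by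
      intro x hx y hy
      have hstep : ∀ ε : ℝ, 0 < ε → dist x y ≤ L * s + ε := by
        intro ε hε
        have hrpos : 0 < s + ε / L := by positivity
        have hW : EMetric.diam (f '' K) ≤ ENNReal.ofReal (s + ε / L) := by
          refine le_trans (Metric.ediam_le_of_forall_dist_le fun u hu v hv =>
            Metric.dist_le_diam_of_mem himg hu hv) (ENNReal.ofReal_le_ofReal ?_)
          have : 0 < ε / L := by positivity
          linarith
        have hcomp : SameRComponent (s + ε / L) (f ⁻¹' (f '' K)) x y :=
          sameR_mono (subset_preimage_image f K)
            (hK.2.isPreconnected.sameRComponent hrpos hx hy)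
        have := hf.2 (s + ε / L) hrpos (f '' K) hW x y hcomp
        calc dist x y ≤ L * (s + ε / L) := this
          _ = L * s + ε := by field_simp
      exact le_of_forall_pos_le_add hstep
    have hdK : Metric.diam K ≤ L * s := Metric.diam_le_of_forall_dist_le (by positivity) key
    constructor
    · have h1 : Metric.diam K ≤ max L 1 * s :=
        le_trans hdK (mul_le_mul_of_nonneg_right (le_max_left _ _) hsnn)
      have h2 := mul_le_mul_of_nonneg_left h1 (inv_pos.2 hc).le
      rwa [inv_mul_cancel_left₀ hc.ne'] at h2
    · calc s ≤ L * Metric.diam K := by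
            simpa [Real.coe_toNNReal L hL.le] using hLip.diam_image_le K hK.1.isBounded
        _ ≤ max L 1 * Metric.diam K :=
            mul_le_mul_of_nonneg_right (le_max_left _ _) Metric.diam_nonneg
  · -- continuum-diameter condition ⇒ Lipschitz light
    intro c hc
    have hc0 : (0:ℝ) < c := lt_of_lt_of_le one_pos hc
    have hfac : (0:ℝ) < 2 * c * Cbt + 1 := by nlinarith [mul_pos hc0 hCbt0]
    have hfac2 : Cbt ≤ 2 * c * Cbt + 1 := by
      nlinarith [mul_le_mul_of_nonneg_left hc hCbt0.le]
    refine ⟨c * (2 * c * Cbt + 1), mul_pos hc0 hfac, ?_⟩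
    intro X Y _ _ hbt f hf
    constructor
    · intro x y
      obtain ⟨K0, hK0, hx, hy, hd⟩ := hbt x y
      calc dist (f x) (f y) ≤ c * Metric.diam K0 :=
            dist_image_le_of_continuum hf hc hK0 hx hy
        _ ≤ c * (Cbt * dist x y) := by
            refine mul_le_mul_of_nonneg_left ?_ hc0.le
            linarith
        _ ≤ c * ((2 * c * Cbt + 1) * dist x y) :=
            mul_le_mul_of_nonneg_left
              (mul_le_mul_of_nonneg_right hfac2 dist_nonneg) hc0.le
        _ = c * (2 * c * Cbt + 1) * dist x y := by ring
    · intro r hr W hW x y hxy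
      obtain ⟨l, ⟨hmem, hch⟩, hh, hl⟩ := hxy
      obtain ⟨K, hK, hxK, hyK, hclose⟩ :=
        path_continuum hbt hf hc hCbt hr.le l hch x y hh hl
      have hWr : ∀ z1 ∈ l, ∀ z2 ∈ l, dist (f z1) (f z2) ≤ r := by
        intro z1 h1 z2 h2
        have h3 : edist (f z1) (f z2) ≤ ENNReal.ofReal r :=
          le_trans (EMetric.edist_le_diam_of_mem (hmem z1 h1) (hmem z2 h2)) hW
        rw [edist_dist] at h3
        exact (ENNReal.ofReal_le_ofReal_iff hr.le).1 h3
      have hdfK : Metric.diam (f '' K) ≤ (2 * c * Cbt + 1) * r := by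
        apply Metric.diam_le_of_forall_dist_le (mul_nonneg hfac.le hr.le)
        rintro u ⟨w1, hw1, rfl⟩ v ⟨w2, hw2, rfl⟩
        obtain ⟨z1, hz1, hd1⟩ := hclose w1 hw1
        obtain ⟨z2, hz2, hd2⟩ := hclose w2 hw2
        calc dist (f w1) (f w2)
            ≤ dist (f w1) (f z1) + dist (f z1) (f z2) + dist (f z2) (f w2) :=
              dist_triangle4 _ _ _ _
          _ ≤ c * (Cbt * r) + r + c * (Cbt * r) := by
              refine add_le_add (add_le_add hd1 (hWr z1 hz1 z2 hz2)) ?_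
              rw [dist_comm]; exact hd2
          _ = (2 * c * Cbt + 1) * r := by ring
      have h1 : c⁻¹ * Metric.diam K ≤ Metric.diam (f '' K) := (hf K hK).1
      have h2 : Metric.diam K ≤ c * Metric.diam (f '' K) := by
        have h3 := mul_le_mul_of_nonneg_left h1 hc0.le
        rwa [mul_inv_cancel_left₀ hc0.ne'] at h3
      calc dist x y ≤ Metric.diam K :=
            Metric.dist_le_diam_of_mem hK.1.isBounded hxK hyK
        _ ≤ c * Metric.diam (f '' K) := h2
        _ ≤ c * ((2 * c * Cbt + 1) * r) := mul_le_mul_of_nonneg_left hdfK hc0.le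
        _ = c * (2 * c * Cbt + 1) * r := by ring
end
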